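/- arXiv:1310.7122 — 4 statements merged into one kernel-verified Lean document; each statement's English description precedes it below -/
import Mathlib

section
/- Let D₁ and D₂ be subsets of ℂ with disjoint closures, each of which is either an open disk, an open half-plane, or the complement of a closed disk. Let p and q be nonzero polynomials over ℂ with deg p + deg q ≥ 1, such that every complex root of p lies in D₁ and every complex root of q lies in D₂; assume moreover that if deg p > deg q then D₂ is the complement of a closed disk, and if deg p < deg q then D₁ is the complement of a closed disk. Then every complex root of the polynomial p'·q − p·q' lies in D₁ ∪ D₂. -/
open Polynomial

/-- `D` is an open disk in `ℂ`. -/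
def IsOpenDisk (D : Set ℂ) : Prop :=
  ∃ c : ℂ, ∃ r : ℝ, 0 < r ∧ D = Metric.ball c r

/-- `D` is an open half-plane in `ℂ`. -/
def IsOpenHalfPlane (D : Set ℂ) : Prop :=
  ∃ a : ℂ, a ≠ 0 ∧ ∃ t : ℝ, D = {z : ℂ | (a * z).re < t}

/-- `D` is the complement of a closed disk in `ℂ`. -/
def IsCoClosedDisk (D : Set ℂ) : Prop :=
  ∃ c : ℂ, ∃ r : ℝ, 0 < r ∧ D = (Metric.closedBall c r)ᶜ

/-- An open disk is not the complement of a closed disk. -/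
lemma BocherAux.disk_not_co {D : Set ℂ} (h : IsOpenDisk D) (h' : IsCoClosedDisk D) : False := by
  obtain ⟨c, r, hr, rfl⟩ := h
  obtain ⟨c', r', hr', hD⟩ := h'
  set v : ℝ := r' + r + dist c c' + 1 with hv
  have hv0 : 0 ≤ v := by positivity
  set x : ℂ := c' + (v : ℂ) with hx
  have hd1 : dist x c' = v := by
    rw [Complex.dist_eq]
    simp [hx, Complex.norm_real, abs_of_nonneg hv0]
  have hx1 : x ∈ (Metric.closedBall c' r')ᶜ := by
    simp only [Set.mem_compl_iff, Metric.mem_closedBall, not_le, hd1]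
    have := dist_nonneg (x := c) (y := c')
    linarith
  rw [← hD] at hx1
  rw [Metric.mem_ball] at hx1
  have htri : dist x c' ≤ dist x c + dist c c' := dist_triangle x c c'
  rw [hd1] at htri
  linarith

/-- An open half-plane is not the complement of a closed disk. -/
lemma BocherAux.half_not_co {D : Set ℂ} (h : IsOpenHalfPlane D) (h' : IsCoClosedDisk D) :
    False := by
  obtain ⟨a, ha, t, hD⟩ := h
  obtain ⟨c, r, hr, hD'⟩ := h'
  have habs : 0 < ‖a‖ := norm_pos_iff.mpr ha
  have hns : 0 < Complex.normSq a := Complex.normSq_pos.mpr ha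
  set s : ℝ := max ((|t| + 1) / Complex.normSq a) ((r + ‖c‖ + 1) / ‖a‖) with hs
  have hs0 : 0 ≤ s := le_trans (by positivity) (le_max_left _ _)
  set z : ℂ := (starRingEnd ℂ) a * (s : ℂ) with hzdef
  have h1 : Complex.normSq a * s ≥ t := by
    have hle : (|t| + 1) / Complex.normSq a ≤ s := le_max_left _ _
    have h2 : |t| + 1 ≤ Complex.normSq a * s := by
      rw [div_le_iff₀ hns] at hle
      linarith
    have := le_abs_self t
    linarith
  have hz1 : z ∉ D := by
    rw [hD]
    simp only [Set.mem_setOf_eq, not_lt]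
    have : a * z = (Complex.normSq a : ℂ) * (s : ℂ) := by
      rw [hzdef, ← mul_assoc, Complex.mul_conj]
    rw [this, ← Complex.ofReal_mul]
    simpa using h1
  have hz2 : z ∈ D := by
    rw [hD']
    simp only [Set.mem_compl_iff, Metric.mem_closedBall, not_le, Complex.dist_eq]
    have hn : ‖z‖ = ‖a‖ * s := by
      rw [hzdef, norm_mul, Complex.norm_conj, Complex.norm_real, Real.norm_eq_abs, abs_of_nonneg hs0]
    have h3 : r + ‖c‖ + 1 ≤ ‖a‖ * s := by
      have hle : (r + ‖c‖ + 1) / ‖a‖ ≤ s := le_max_right _ _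
      rw [div_le_iff₀ habs] at hle
      linarith
    have h4 : ‖z‖ - ‖c‖ ≤ ‖z - c‖ := by
      simpa using norm_sub_norm_le z c
    linarith
  exact hz1 hz2

/-- Two complements of closed disks always intersect. -/
lemma BocherAux.co_co_inter {D₁ D₂ : Set ℂ} (h₁ : IsCoClosedDisk D₁) (h₂ : IsCoClosedDisk D₂) :
    ∃ x, x ∈ D₁ ∧ x ∈ D₂ := by
  obtain ⟨c₁, r₁, hr₁, rfl⟩ := h₁
  obtain ⟨c₂, r₂, hr₂, rfl⟩ := h₂
  set v : ℝ := r₁ + r₂ + dist c₁ c₂ + 1 with hv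
  have hv0 : 0 ≤ v := by positivity
  set x : ℂ := c₁ + (v : ℂ) with hx
  have hd1 : dist x c₁ = v := by
    rw [Complex.dist_eq]; simp [hx, Complex.norm_real, abs_of_nonneg hv0]
  have htri : dist x c₁ ≤ dist x c₂ + dist c₂ c₁ := dist_triangle x c₂ c₁
  refine ⟨x, ?_, ?_⟩
  · simp only [Set.mem_compl_iff, Metric.mem_closedBall, not_le, hd1]
    have := dist_nonneg (x := c₁) (y := c₂); linarith
  · simp only [Set.mem_compl_iff, Metric.mem_closedBall, not_le]
    rw [hd1] at htri
    rw [dist_comm c₂ c₁] at htri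
    linarith

lemma BocherAux.re_ofReal_mul (r : ℝ) (w : ℂ) : ((r : ℂ) * w).re = r * w.re := by
  simp [Complex.mul_re]

/-- Cauchy–Schwarz for multiset sums of complex numbers. -/
lemma BocherAux.normSq_sum_le (s : Multiset ℂ) :
    Complex.normSq s.sum ≤ (Multiset.card s : ℝ) * (s.map Complex.normSq).sum := by
  induction s using Multiset.induction with
  | empty => simp
  | cons a s ih =>
    rcases Nat.eq_zero_or_pos (Multiset.card s) with h0 | hpos
    · rw [Multiset.card_eq_zero] at h0
      subst h0; simp
    · rw [Multiset.sum_cons, Multiset.map_cons, Multiset.sum_cons, Multiset.card_cons]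
      set S := s.sum with hS
      set n : ℝ := (Multiset.card s : ℝ) with hn
      set T := (s.map Complex.normSq).sum with hT
      have hn1 : 1 ≤ n := by
        rw [hn]; exact_mod_cast Nat.one_le_iff_ne_zero.mpr (Nat.pos_iff_ne_zero.mp hpos)
      have hTnn : 0 ≤ T := Multiset.sum_nonneg (by
        intro x hx
        obtain ⟨y, _, rfl⟩ := Multiset.mem_map.mp hx
        exact Complex.normSq_nonneg y)
      have h0' : 0 ≤ Complex.normSq ((n : ℂ) * a - S) := Complex.normSq_nonneg _
      have e1 : Complex.normSq ((n : ℂ) * a - S)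
          = n ^ 2 * Complex.normSq a - 2 * (n * (a * (starRingEnd ℂ) S).re)
            + Complex.normSq S := by
        simp [Complex.normSq_sub, Complex.normSq_mul, Complex.normSq_ofReal, Complex.mul_re,
          Complex.mul_im, Complex.normSq_apply, Complex.conj_re, Complex.conj_im,
          Complex.ofReal_re, Complex.ofReal_im]
        ring
      have e2 : Complex.normSq (a + S)
          = Complex.normSq a + Complex.normSq S + 2 * (a * (starRingEnd ℂ) S).re :=
        Complex.normSq_add a S
      rw [e1] at h0'
      have hcast : ((Multiset.card s + 1 : ℕ) : ℝ) = n + 1 := by push_cast [hn]; ring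
      rw [hcast, e2]
      nlinarith [ih, Complex.normSq_nonneg a, Complex.normSq_nonneg S, h0', hTnn, hn1]

lemma BocherAux.map_sum_neg (f : ℂ → ℝ) (s : Multiset ℂ) (h0 : s ≠ 0)
    (h : ∀ x ∈ s, f x < 0) : (s.map f).sum < 0 := by
  induction s using Multiset.induction with
  | empty => exact absurd rfl h0
  | cons a s ih =>
    rw [Multiset.map_cons, Multiset.sum_cons]
    rcases eq_or_ne s 0 with rfl | hs
    · simpa using h a (Multiset.mem_cons_self a 0)
    · have h1 := ih hs (fun x hx => h x (Multiset.mem_cons_of_mem hx))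
      have h2 := h a (Multiset.mem_cons_self a s)
      linarith

/-- Jensen's inequality for the convex quadratic `u ↦ α ‖u‖² + re (β u) + γ` with `α ≥ 0`:
the value at the centroid of a multiset is negative if all values are negative. -/
lemma BocherAux.jensen (α : ℝ) (hα : 0 ≤ α) (β : ℂ) (γ : ℝ) (s : Multiset ℂ) (hs : s ≠ 0)
    (h : ∀ x ∈ s, α * Complex.normSq x + (β * x).re + γ < 0) :
    α * Complex.normSq (((Multiset.card s : ℕ) : ℂ)⁻¹ * s.sum)
      + (β * (((Multiset.card s : ℕ) : ℂ)⁻¹ * s.sum)).re + γ < 0 := by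
  set m : ℝ := ((Multiset.card s : ℕ) : ℝ) with hm
  have hmpos : 0 < m := by
    rw [hm]; exact_mod_cast Multiset.card_pos.mpr hs
  set S := s.sum with hS
  set Q := Complex.normSq S with hQ
  set T := (s.map Complex.normSq).sum with hT
  set R := (β * S).re with hR
  have hsum : α * T + R + m * γ < 0 := by
    have h1 : (s.map (fun x => α * Complex.normSq x + (β * x).re + γ)).sum < 0 :=
      BocherAux.map_sum_neg _ s hs h
    have h2 : (s.map (fun x => α * Complex.normSq x + (β * x).re + γ)).sum
        = α * T + R + m * γ := by
      rw [show (fun x => α * Complex.normSq x + (β * x).re + γ)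
            = fun x => (α * Complex.normSq x + (β * x).re) + γ from rfl]
      rw [Multiset.sum_map_add, Multiset.sum_map_add]
      congr 1
      · congr 1
        · exact Multiset.sum_map_mul_left
        · have e3 : (s.map fun x => (β * x).re).sum = ((s.map fun x => β * x).sum).re := by
            have := Complex.reAddGroupHom.map_multiset_sum (s.map fun x => β * x)
            simpa [Multiset.map_map, Function.comp] using this.symm
          rw [e3]
          have e4 : (s.map fun x => β * x).sum = β * S := by
            have := Multiset.sum_map_mul_left (a := β) (s := s) (f := id)
            simpa using this
          rw [e4]
      · simp [Multiset.map_const', Multiset.sum_replicate, nsmul_eq_mul, hm, mul_comm]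
    linarith [h2 ▸ h1]
  have hCS : Q ≤ m * T := by
    rw [hQ, hS, hT, hm]; exact BocherAux.normSq_sum_le s
  have hQnn : 0 ≤ Q := Complex.normSq_nonneg _
  have hcast : ((Multiset.card s : ℕ) : ℂ) = ((m : ℝ) : ℂ) := by
    rw [hm]; push_cast; ring
  have hcent1 : Complex.normSq (((Multiset.card s : ℕ) : ℂ)⁻¹ * S) = Q / m ^ 2 := by
    rw [hcast, ← Complex.ofReal_inv, Complex.normSq_mul, Complex.normSq_ofReal, ← hQ, sq]
    field_simp
  have hcent2 : (β * (((Multiset.card s : ℕ) : ℂ)⁻¹ * S)).re = R / m := by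
    rw [hcast, ← Complex.ofReal_inv, mul_left_comm, BocherAux.re_ofReal_mul, ← hR,
      inv_mul_eq_div]
  rw [hcent1, hcent2]
  have h2 : α * Q / m ≤ α * T := by
    rw [div_le_iff₀ hmpos]
    nlinarith [mul_le_mul_of_nonneg_left hCS hα]
  have he : α * (Q / m ^ 2) + R / m + γ = (α * Q / m + R + m * γ) / m := by
    field_simp
  rw [he]
  apply div_neg_of_neg_of_pos _ hmpos
  linarith

/-- Logarithmic derivative of a product of linear factors. -/
lemma BocherAux.logderiv (s : Multiset ℂ) (z : ℂ) (hz : ∀ a ∈ s, z ≠ a) :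
    eval z (derivative (s.map fun a => X - C a).prod)
      = eval z ((s.map fun a => X - C a).prod) * (s.map fun a => (z - a)⁻¹).sum := by
  induction s using Multiset.induction with
  | empty => simp
  | cons a s ih =>
    have hza : z - a ≠ 0 := sub_ne_zero.mpr (hz a (Multiset.mem_cons_self a s))
    have ih' := ih (fun b hb => hz b (Multiset.mem_cons_of_mem hb))
    rw [Multiset.map_cons, Multiset.prod_cons, Multiset.map_cons, Multiset.sum_cons]
    rw [derivative_mul]
    simp only [derivative_sub, derivative_X, derivative_C, sub_zero, one_mul,
      eval_add, eval_mul, eval_sub, eval_X, eval_C, ih']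
    field_simp

/-- Key geometric lemma: the image of a face of a circle not containing `z₀`, under the
map `a ↦ (z₀ - a)⁻¹`, is exactly the negativity set of a convex quadratic functional. -/
lemma BocherAux.shapeF (D : Set ℂ) (h : IsOpenDisk D ∨ IsOpenHalfPlane D ∨ IsCoClosedDisk D)
    (z₀ : ℂ) (hz : z₀ ∉ D) :
    ∃ (α : ℝ) (β : ℂ) (γ : ℝ), 0 ≤ α ∧ ∀ u : ℂ,
      (α * Complex.normSq u + (β * u).re + γ < 0 ↔
        ((u ≠ 0 ∧ z₀ - u⁻¹ ∈ D) ∨ (u = 0 ∧ IsCoClosedDisk D))) := by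
  rcases h with hd | hh | hc
  · -- open disk
    obtain ⟨c, r, hr, hD⟩ := hd
    have hdist : r ≤ ‖z₀ - c‖ := by
      have : z₀ ∉ Metric.ball c r := hD ▸ hz
      rw [Metric.mem_ball, Complex.dist_eq, not_lt] at this
      exact this
    set d : ℂ := z₀ - c with hdd
    refine ⟨Complex.normSq d - r ^ 2, -2 * d, 1, ?_, ?_⟩
    · nlinarith [Complex.sq_norm d]
    · intro u
      rcases eq_or_ne u 0 with rfl | hu
      · constructor
        · intro hlt
          exfalso
          simp only [Complex.normSq_zero, mul_zero, Complex.zero_re, zero_add] at hlt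
          norm_num at hlt
        · rintro (⟨hne, -⟩ | ⟨-, hco⟩)
          · exact absurd rfl hne
          · exact absurd (BocherAux.disk_not_co ⟨c, r, hr, hD⟩ hco) not_false
      · have hu' : (0 : ℝ) < Complex.normSq u := Complex.normSq_pos.mpr hu
        have hau : 0 < ‖u‖ := norm_pos_iff.mpr hu
        have key : z₀ - u⁻¹ ∈ D ↔ Complex.normSq (d * u - 1) < r ^ 2 * Complex.normSq u := by
          rw [hD, Metric.mem_ball, Complex.dist_eq]
          have hx : z₀ - u⁻¹ - c = (d * u - 1) * u⁻¹ := by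
            field_simp [hdd]
            ring
          rw [hx, norm_mul, norm_inv, ← div_eq_mul_inv, div_lt_iff₀ hau]
          constructor
          · intro hlt
            nlinarith [Complex.sq_norm (d * u - 1), Complex.sq_norm u,
              norm_nonneg (d * u - 1), norm_nonneg u]
          · intro hlt
            nlinarith [Complex.sq_norm (d * u - 1), Complex.sq_norm u,
              norm_nonneg (d * u - 1), mul_pos hr hau]
        have hexp : Complex.normSq (d * u - 1)
            = Complex.normSq d * Complex.normSq u - 2 * (d * u).re + 1 := by
          rw [Complex.normSq_sub, Complex.normSq_mul, Complex.normSq_one]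
          simp
          ring
        have hre : ((-2 : ℂ) * d * u).re = -2 * (d * u).re := by
          rw [mul_assoc, show ((-2 : ℂ)) = (((-2 : ℝ)) : ℂ) by norm_num,
            BocherAux.re_ofReal_mul]
        constructor
        · intro hlt
          refine Or.inl ⟨hu, key.mpr ?_⟩
          rw [hexp]
          rw [hre] at hlt
          nlinarith
        · rintro (⟨-, hmem⟩ | ⟨h0, -⟩)
          · have := key.mp hmem
            rw [hexp] at this
            rw [hre]
            nlinarith
          · exact absurd h0 hu
  · -- open half-plane
    obtain ⟨a, ha, t, hD⟩ := hh
    have hts : t ≤ (a * z₀).re := by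
      have : z₀ ∉ {z : ℂ | (a * z).re < t} := hD ▸ hz
      simpa using this
    set s : ℝ := (a * z₀).re - t with hsd
    refine ⟨s, -(starRingEnd ℂ) a, 0, by linarith, ?_⟩
    intro u
    rcases eq_or_ne u 0 with rfl | hu
    · constructor
      · intro hlt
        exfalso
        simp only [Complex.normSq_zero, mul_zero, Complex.zero_re, add_zero, zero_add] at hlt
        exact lt_irrefl 0 hlt
      · rintro (⟨hne, -⟩ | ⟨-, hco⟩)
        · exact absurd rfl hne
        · exact absurd (BocherAux.half_not_co ⟨a, ha, t, hD⟩ hco) not_false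
    · have hu' : (0 : ℝ) < Complex.normSq u := Complex.normSq_pos.mpr hu
      set R : ℝ := (a * (starRingEnd ℂ) u).re with hRd
      have hre1 : (-(starRingEnd ℂ) a * u).re = -R := by
        have h1 : (starRingEnd ℂ) a * u = (starRingEnd ℂ) (a * (starRingEnd ℂ) u) := by
          rw [map_mul, Complex.conj_conj]
        rw [neg_mul, Complex.neg_re, h1, Complex.conj_re]
      have hmem : z₀ - u⁻¹ ∈ D ↔ s * Complex.normSq u < R := by
        rw [hD]
        simp only [Set.mem_setOf_eq]
        have h2 : a * (z₀ - u⁻¹)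
            = a * z₀ - ((Complex.normSq u)⁻¹ : ℝ) * (a * (starRingEnd ℂ) u) := by
          rw [Complex.inv_def]
          ring
        rw [h2, Complex.sub_re, BocherAux.re_ofReal_mul, ← hRd]
        constructor
        · intro hlt
          have h3 : s < (Complex.normSq u)⁻¹ * R := by linarith
          calc s * Complex.normSq u < ((Complex.normSq u)⁻¹ * R) * Complex.normSq u :=
                (mul_lt_mul_iff_left₀ hu').mpr h3
            _ = R := by field_simp
        · intro hlt
          have h3 : s < (Complex.normSq u)⁻¹ * R := by
            rw [← mul_lt_mul_iff_left₀ hu']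
            calc s * Complex.normSq u < R := hlt
              _ = (Complex.normSq u)⁻¹ * R * Complex.normSq u := by field_simp
          linarith
      constructor
      · intro hlt
        refine Or.inl ⟨hu, hmem.mpr ?_⟩
        rw [hre1] at hlt
        linarith
      · rintro (⟨-, hm⟩ | ⟨h0, -⟩)
        · rw [hre1]
          have := hmem.mp hm
          linarith
        · exact absurd h0 hu
  · -- complement of a closed disk
    obtain ⟨c, r, hr, hD⟩ := hc
    have hdist : ‖z₀ - c‖ ≤ r := by
      have : z₀ ∉ (Metric.closedBall c r)ᶜ := hD ▸ hz
      rw [Set.notMem_compl_iff, Metric.mem_closedBall, Complex.dist_eq] at this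
      exact this
    set d : ℂ := z₀ - c with hdd
    refine ⟨r ^ 2 - Complex.normSq d, 2 * d, -1, ?_, ?_⟩
    · nlinarith [Complex.sq_norm d, norm_nonneg d]
    · intro u
      rcases eq_or_ne u 0 with rfl | hu
      · constructor
        · intro _
          exact Or.inr ⟨rfl, ⟨c, r, hr, hD⟩⟩
        · intro _
          simp only [Complex.normSq_zero, mul_zero, Complex.zero_re, add_zero, zero_add]
          norm_num
      · have hu' : (0 : ℝ) < Complex.normSq u := Complex.normSq_pos.mpr hu
        have hau : 0 < ‖u‖ := norm_pos_iff.mpr hu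
        have key : z₀ - u⁻¹ ∈ D ↔ r ^ 2 * Complex.normSq u < Complex.normSq (d * u - 1) := by
          rw [hD]
          simp only [Set.mem_compl_iff, Metric.mem_closedBall, not_le, Complex.dist_eq]
          have hx : z₀ - u⁻¹ - c = (d * u - 1) * u⁻¹ := by
            field_simp [hdd]
            ring
          rw [hx, norm_mul, norm_inv, ← div_eq_mul_inv, lt_div_iff₀ hau]
          constructor
          · intro hlt
            nlinarith [Complex.sq_norm (d * u - 1), Complex.sq_norm u,
              norm_nonneg (d * u - 1), mul_pos hr hau]
          · intro hlt
            nlinarith [Complex.sq_norm (d * u - 1), Complex.sq_norm u,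
              norm_nonneg (d * u - 1), mul_pos hr hau]
        have hexp : Complex.normSq (d * u - 1)
            = Complex.normSq d * Complex.normSq u - 2 * (d * u).re + 1 := by
          rw [Complex.normSq_sub, Complex.normSq_mul, Complex.normSq_one]
          simp
          ring
        have hre : ((2 : ℂ) * d * u).re = 2 * (d * u).re := by
          rw [mul_assoc, show ((2 : ℂ)) = (((2 : ℝ)) : ℂ) by norm_num,
            BocherAux.re_ofReal_mul]
        constructor
        · intro hlt
          refine Or.inl ⟨hu, key.mpr ?_⟩
          rw [hexp]
          rw [hre] at hlt
          nlinarith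
        · rintro (⟨-, hmem⟩ | ⟨h0, -⟩)
          · have := key.mp hmem
            rw [hexp] at this
            rw [hre]
            nlinarith
          · exact absurd h0 hu

/-- **Bôcher's theorem** (extension of the Gauss–Lucas theorem to rational functions).
If all the roots of `p` lie in `D₁`, all the roots of `q` lie in `D₂`, where `D₁`, `D₂` are
faces (with disjoint closures) of two circles on the Riemann sphere, and the degree
conditions encode the behavior of `p/q` at infinity, then all finite critical points of
`p/q`, i.e. the roots of `p'·q − p·q'`, lie in `D₁ ∪ D₂`. -/
theorem bocher_theorem (D₁ D₂ : Set ℂ)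
    (h₁ : IsOpenDisk D₁ ∨ IsOpenHalfPlane D₁ ∨ IsCoClosedDisk D₁)
    (h₂ : IsOpenDisk D₂ ∨ IsOpenHalfPlane D₂ ∨ IsCoClosedDisk D₂)
    (hdisj : Disjoint (closure D₁) (closure D₂))
    (p q : Polynomial ℂ) (hp : p ≠ 0) (hq : q ≠ 0)
    (hdeg : 1 ≤ p.natDegree + q.natDegree)
    (hproots : ∀ z : ℂ, p.IsRoot z → z ∈ D₁)
    (hqroots : ∀ z : ℂ, q.IsRoot z → z ∈ D₂)
    (hpq : p.natDegree > q.natDegree → IsCoClosedDisk D₂)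
    (hqp : p.natDegree < q.natDegree → IsCoClosedDisk D₁) :
    ∀ z : ℂ, (derivative p * q - p * derivative q).IsRoot z → z ∈ D₁ ∪ D₂ := by
  intro z₀ hroot
  by_contra hmem
  have hdisj' : Disjoint D₁ D₂ := hdisj.mono subset_closure subset_closure
  have hz1 : z₀ ∉ D₁ := fun h => hmem (Or.inl h)
  have hz2 : z₀ ∉ D₂ := fun h => hmem (Or.inr h)
  have hp0 : eval z₀ p ≠ 0 := fun h => hz1 (hproots z₀ h)
  have hq0 : eval z₀ q ≠ 0 := fun h => hz2 (hqroots z₀ h)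
  have hpc : Multiset.card p.roots = p.natDegree :=
    (splits_iff_card_roots).mp (IsAlgClosed.splits p)
  have hqc : Multiset.card q.roots = q.natDegree :=
    (splits_iff_card_roots).mp (IsAlgClosed.splits q)
  have hpfac := Polynomial.C_leadingCoeff_mul_prod_multiset_X_sub_C hpc
  have hqfac := Polynomial.C_leadingCoeff_mul_prod_multiset_X_sub_C hqc
  have hz_ne_p : ∀ a ∈ p.roots, z₀ ≠ a := by
    intro a ha h
    exact hp0 (by rw [h]; exact isRoot_of_mem_roots ha)
  have hz_ne_q : ∀ a ∈ q.roots, z₀ ≠ a := by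
    intro a ha h
    exact hq0 (by rw [h]; exact isRoot_of_mem_roots ha)
  set Sp := (p.roots.map fun a => (z₀ - a)⁻¹).sum with hSpd
  set Sq := (q.roots.map fun a => (z₀ - a)⁻¹).sum with hSqd
  have hderp : eval z₀ (derivative p) = eval z₀ p * Sp := by
    conv_lhs => rw [← hpfac]
    conv_rhs => rw [← hpfac]
    rw [derivative_C_mul, eval_mul, eval_C, BocherAux.logderiv p.roots z₀ hz_ne_p,
      eval_mul, eval_C, hSpd]
    ring
  have hderq : eval z₀ (derivative q) = eval z₀ q * Sq := by
    conv_lhs => rw [← hqfac]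
    conv_rhs => rw [← hqfac]
    rw [derivative_C_mul, eval_mul, eval_C, BocherAux.logderiv q.roots z₀ hz_ne_q,
      eval_mul, eval_C, hSqd]
    ring
  have h0 : eval z₀ (derivative p) * eval z₀ q - eval z₀ p * eval z₀ (derivative q) = 0 := by
    have := hroot
    simp only [IsRoot, eval_sub, eval_mul] at this
    exact this
  rw [hderp, hderq] at h0
  have heq : eval z₀ p * eval z₀ q * Sp = eval z₀ p * eval z₀ q * Sq := by
    linear_combination h0
  have hSeq : Sp = Sq := mul_left_cancel₀ (mul_ne_zero hp0 hq0) heq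
  obtain ⟨α₁, β₁, γ₁, hα₁, hF₁⟩ := BocherAux.shapeF D₁ h₁ z₀ hz1
  obtain ⟨α₂, β₂, γ₂, hα₂, hF₂⟩ := BocherAux.shapeF D₂ h₂ z₀ hz2
  set m := p.natDegree with hm
  set n := q.natDegree with hn
  set N := max m n with hN
  have hN1 : 1 ≤ N := by omega
  set s₁ : Multiset ℂ := (p.roots.map fun a => (z₀ - a)⁻¹) + Multiset.replicate (N - m) 0
    with hs₁d
  set s₂ : Multiset ℂ := (q.roots.map fun a => (z₀ - a)⁻¹) + Multiset.replicate (N - n) 0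
    with hs₂d
  have hcard₁ : Multiset.card s₁ = N := by
    rw [hs₁d, Multiset.card_add, Multiset.card_map, hpc, Multiset.card_replicate]
    omega
  have hcard₂ : Multiset.card s₂ = N := by
    rw [hs₂d, Multiset.card_add, Multiset.card_map, hqc, Multiset.card_replicate]
    omega
  have hsum₁ : s₁.sum = Sp := by
    rw [hs₁d, Multiset.sum_add, Multiset.sum_replicate]
    simp [hSpd]
  have hsum₂ : s₂.sum = Sq := by
    rw [hs₂d, Multiset.sum_add, Multiset.sum_replicate]
    simp [hSqd]
  have hne₁ : s₁ ≠ 0 := by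
    intro h
    rw [h] at hcard₁
    simp at hcard₁
    omega
  have hne₂ : s₂ ≠ 0 := by
    intro h
    rw [h] at hcard₂
    simp at hcard₂
    omega
  have hmem₁ : ∀ x ∈ s₁, α₁ * Complex.normSq x + (β₁ * x).re + γ₁ < 0 := by
    intro x hx
    rw [hs₁d, Multiset.mem_add] at hx
    rcases hx with hx | hx
    · obtain ⟨a, ha, rfl⟩ := Multiset.mem_map.mp hx
      have haD : a ∈ D₁ := hproots a (isRoot_of_mem_roots ha)
      have hza : z₀ - a ≠ 0 := sub_ne_zero.mpr (hz_ne_p a ha)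
      rw [hF₁]
      refine Or.inl ⟨inv_ne_zero hza, ?_⟩
      rw [inv_inv, sub_sub_cancel]
      exact haD
    · obtain ⟨hc, rfl⟩ := Multiset.mem_replicate.mp hx
      rw [hF₁]
      refine Or.inr ⟨rfl, ?_⟩
      apply hqp
      omega
  have hmem₂ : ∀ x ∈ s₂, α₂ * Complex.normSq x + (β₂ * x).re + γ₂ < 0 := by
    intro x hx
    rw [hs₂d, Multiset.mem_add] at hx
    rcases hx with hx | hx
    · obtain ⟨a, ha, rfl⟩ := Multiset.mem_map.mp hx
      have haD : a ∈ D₂ := hqroots a (isRoot_of_mem_roots ha)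
      have hza : z₀ - a ≠ 0 := sub_ne_zero.mpr (hz_ne_q a ha)
      rw [hF₂]
      refine Or.inl ⟨inv_ne_zero hza, ?_⟩
      rw [inv_inv, sub_sub_cancel]
      exact haD
    · obtain ⟨hc, rfl⟩ := Multiset.mem_replicate.mp hx
      rw [hF₂]
      refine Or.inr ⟨rfl, ?_⟩
      apply hpq
      omega
  have hc₁ := BocherAux.jensen α₁ hα₁ β₁ γ₁ s₁ hne₁ hmem₁
  have hc₂ := BocherAux.jensen α₂ hα₂ β₂ γ₂ s₂ hne₂ hmem₂
  rw [hcard₁, hsum₁] at hc₁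
  rw [hcard₂, hsum₂, ← hSeq] at hc₂
  rw [hF₁] at hc₁
  rw [hF₂] at hc₂
  rcases hc₁ with ⟨hw0, hw1⟩ | ⟨hw0, hco1⟩ <;>
    rcases hc₂ with ⟨hw0', hw2⟩ | ⟨hw0', hco2⟩
  · exact Set.disjoint_left.mp hdisj' hw1 hw2
  · exact hw0 hw0'
  · exact hw0' hw0
  · obtain ⟨x, hx1, hx2⟩ := BocherAux.co_co_inter hco1 hco2
    exact Set.disjoint_left.mp hdisj' hx1 hx2
end

section
/- For every integer n ≥ 2, every v ∈ ℂⁿ⁻¹, and every ρ > 0, there exists ν > 0 such that: for every v̂ ∈ ℂⁿ⁻¹ with ‖v − v̂‖ < ν and every û ∈ ℂⁿ⁻¹ with Θ(û) = v̂, there exists u ∈ ℂⁿ⁻¹ with Θ(u) = v and ‖u − û‖ < ρ. -/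
open Polynomial

/-- The formal antiderivative (with zero constant term) of a complex polynomial. -/
noncomputable def polyAntideriv (q : Polynomial ℂ) : Polynomial ℂ :=
  q.sum fun k a => Polynomial.C (a / ((k : ℂ) + 1)) * Polynomial.X ^ (k + 1)

/-- For `u ∈ ℂᵐ`, `criticalPoly u` is the unique monic polynomial `p` of degree `m + 1`
with `p(0) = 0` and `p' = (m + 1)·∏ᵢ (X − uᵢ)`; its critical points are prescribed by `u`. -/
noncomputable def criticalPoly {m : ℕ} (u : Fin m → ℂ) : Polynomial ℂ :=
  polyAntideriv (Polynomial.C ((m : ℂ) + 1) * ∏ i, (Polynomial.X - Polynomial.C (u i)))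

/-- The map `Θ` sending a list of prescribed critical points to the corresponding list of
critical values. -/
noncomputable def Theta {m : ℕ} (u : Fin m → ℂ) : Fin m → ℂ :=
  fun i => (criticalPoly u).eval (u i)

/-- `V_m`: the set of `v ∈ ℂᵐ` with `0 ≤ |v 0| ≤ ⋯ ≤ |v (m-1)| < 1`. -/
def Vset (m : ℕ) : Set (Fin m → ℂ) :=
  {v | (Monotone fun i => ‖v i‖) ∧ ∀ i, ‖v i‖ < 1}

theorem derivative_polyAntideriv (q : ℂ[X]) : derivative (polyAntideriv q) = q := by
  conv_rhs => rw [← Polynomial.sum_C_mul_X_pow_eq q]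
  unfold polyAntideriv Polynomial.sum
  rw [Polynomial.derivative_sum]
  refine Finset.sum_congr rfl fun k _ => ?_
  rw [Polynomial.derivative_C_mul_X_pow]
  have hk : ((k:ℂ) + 1) ≠ 0 := by exact_mod_cast Nat.succ_ne_zero k
  have : (q.coeff k / ((k:ℂ) + 1) * ((k+1 : ℕ) : ℂ)) = q.coeff k := by
    push_cast
    rw [div_mul_cancel₀ _ hk]
  rw [this]
  simp

theorem polyAntideriv_as_sum (q : ℂ[X]) (N : ℕ) (h : q.natDegree < N) :
    polyAntideriv q = ∑ k ∈ Finset.range N, C (q.coeff k / ((k:ℂ)+1)) * X^(k+1) := by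
  unfold polyAntideriv
  exact q.sum_over_range' (by simp) N h

theorem eval_polyAntideriv (q : ℂ[X]) (N : ℕ) (h : q.natDegree < N) (x : ℂ) :
    (polyAntideriv q).eval x = ∑ k ∈ Finset.range N, q.coeff k / ((k:ℂ)+1) * x^(k+1) := by
  rw [polyAntideriv_as_sum q N h, Polynomial.eval_finset_sum]
  simp

theorem continuous_coeff_prod {ι : Type*} [DecidableEq ι] (s : Finset ι) :
    ∀ k, Continuous fun u : ι → ℂ => (∏ i ∈ s, (X - C (u i))).coeff k := by
  induction s using Finset.induction with
  | empty => intro k; simp only [Finset.prod_empty, Polynomial.coeff_one]; exact continuous_const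
  | @insert a s ha ih =>
    intro k
    have hrw : ∀ u : ι → ℂ, (∏ i ∈ insert a s, (X - C (u i))).coeff k
        = (X * ∏ i ∈ s, (X - C (u i))).coeff k - u a * (∏ i ∈ s, (X - C (u i))).coeff k := by
      intro u
      rw [Finset.prod_insert ha, sub_mul, Polynomial.coeff_sub, Polynomial.coeff_C_mul]
    simp only [hrw]
    match k with
    | 0 =>
      simp only [Polynomial.mul_coeff_zero, Polynomial.coeff_X_zero, zero_mul]
      exact continuous_const.sub ((continuous_apply a).mul (ih 0))
    | k + 1 =>
      simp only [Polynomial.coeff_X_mul]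
      exact (ih k).sub ((continuous_apply a).mul (ih (k+1)))

theorem coeff_prod_smul {ι : Type*} [DecidableEq ι] (s : Finset ι) (c : ℂ) (u : ι → ℂ) :
    ∀ k, c ^ k * (∏ i ∈ s, (X - C (c * u i))).coeff k
      = c ^ s.card * (∏ i ∈ s, (X - C (u i))).coeff k := by
  induction s using Finset.induction with
  | empty =>
    intro k
    match k with
    | 0 => simp
    | k + 1 => simp [Polynomial.coeff_one]
  | @insert a s ha ih =>
    intro k
    rw [Finset.prod_insert ha, Finset.prod_insert ha, Finset.card_insert_of_notMem ha]
    rw [sub_mul, sub_mul, Polynomial.coeff_sub, Polynomial.coeff_sub,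
      Polynomial.coeff_C_mul, Polynomial.coeff_C_mul]
    match k with
    | 0 =>
      simp only [Polynomial.mul_coeff_zero, Polynomial.coeff_X_zero, zero_mul]
      have h0 := ih 0
      simp only [pow_zero, one_mul] at h0
      rw [h0]; ring
    | k + 1 =>
      simp only [Polynomial.coeff_X_mul]
      have h1 := ih k
      have h2 := ih (k+1)
      calc c ^ (k+1) * ((∏ i ∈ s, (X - C (c * u i))).coeff k
              - c * u a * (∏ i ∈ s, (X - C (c * u i))).coeff (k+1))
          = c * (c ^ k * (∏ i ∈ s, (X - C (c * u i))).coeff k)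
            - u a * c * (c ^ (k+1) * (∏ i ∈ s, (X - C (c * u i))).coeff (k+1)) := by ring
        _ = c ^ (s.card + 1) * ((∏ i ∈ s, (X - C (u i))).coeff k
              - u a * (∏ i ∈ s, (X - C (u i))).coeff (k+1)) := by rw [h1, h2]; ring

theorem natDegree_cprod {m : ℕ} (u : Fin m → ℂ) :
    (Polynomial.C ((m : ℂ) + 1) * ∏ i, (Polynomial.X - Polynomial.C (u i))).natDegree ≤ m := by
  refine (Polynomial.natDegree_C_mul_le _ _).trans ?_
  rw [Polynomial.natDegree_prod_of_monic _ _ (fun i _ => monic_X_sub_C (u i))]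
  simp

theorem criticalPoly_eval {m : ℕ} (u : Fin m → ℂ) (x : ℂ) :
    (criticalPoly u).eval x = ∑ k ∈ Finset.range (m+1),
      (((m:ℂ)+1) * (∏ j, (X - C (u j))).coeff k) / ((k:ℂ)+1) * x^(k+1) := by
  rw [criticalPoly, eval_polyAntideriv _ (m+1) (Nat.lt_succ_of_le (natDegree_cprod u)) x]
  refine Finset.sum_congr rfl fun k _ => ?_
  rw [Polynomial.coeff_C_mul]

theorem criticalPoly_eval_zero {m : ℕ} (u : Fin m → ℂ) : (criticalPoly u).eval 0 = 0 := by
  rw [criticalPoly_eval]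
  simp

theorem natDegree_criticalPoly_le {m : ℕ} (u : Fin m → ℂ) :
    (criticalPoly u).natDegree ≤ m + 1 := by
  rw [criticalPoly, polyAntideriv_as_sum _ (m+1) (Nat.lt_succ_of_le (natDegree_cprod u))]
  refine Polynomial.natDegree_sum_le_of_forall_le _ _ fun k hk => ?_
  refine (Polynomial.natDegree_C_mul_le _ _).trans ?_
  rw [Polynomial.natDegree_X_pow]
  have := Finset.mem_range.mp hk
  omega

theorem continuous_theta (m : ℕ) : Continuous (Theta (m := m)) := by
  apply continuous_pi
  intro i
  have : (fun u : Fin m → ℂ => Theta u i) = fun u => ∑ k ∈ Finset.range (m+1),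
      (((m:ℂ)+1) * (∏ j, (X - C (u j))).coeff k) / ((k:ℂ)+1) * (u i)^(k+1) := by
    funext u
    exact criticalPoly_eval u (u i)
  rw [this]
  refine continuous_finset_sum _ fun k _ => ?_
  exact (((continuous_const.mul (continuous_coeff_prod Finset.univ k)).div_const _).mul
    ((continuous_apply i).pow (k+1)))

theorem theta_smul {m : ℕ} (c : ℂ) (u : Fin m → ℂ) (i : Fin m) :
    Theta (fun j => c * u j) i = c^(m+1) * Theta u i := by
  show (criticalPoly _).eval (c * u i) = c^(m+1) * (criticalPoly u).eval (u i)
  rw [criticalPoly_eval, criticalPoly_eval, Finset.mul_sum]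
  refine Finset.sum_congr rfl fun k _ => ?_
  have h := coeff_prod_smul Finset.univ c u k
  rw [Finset.card_univ, Fintype.card_fin] at h
  rw [mul_pow]
  linear_combination (((m:ℂ)+1) / ((k:ℂ)+1) * (u i) ^ (k+1) * c) * h

theorem theta_eq_zero_iff {m : ℕ} (hm : 1 ≤ m) (u : Fin m → ℂ) (h : Theta u = 0) : u = 0 := by
  classical
  set p := criticalPoly u with hp
  have hd : derivative p = C ((m:ℂ)+1) * ∏ i, (X - C (u i)) := derivative_polyAntideriv _
  have hroot : ∀ i, p.IsRoot (u i) := fun i => congrFun h i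
  have hm1 : ((m:ℂ) + 1) ≠ 0 := by exact_mod_cast Nat.succ_ne_zero m
  set M : Multiset ℂ := Multiset.map u Finset.univ.val with hM
  have hcard : Multiset.card M = m := by simp [hM]
  have hprod : (∏ i, (X - C (u i))) = (M.map fun a => X - C a).prod := by
    rw [hM, Multiset.map_map]
    rfl
  have hderoots : (derivative p).roots = M := by
    rw [hd, Polynomial.roots_C_mul _ hm1, hprod, Polynomial.roots_multiset_prod_X_sub_C]
  have hdne : derivative p ≠ 0 := by
    rw [hd]
    refine mul_ne_zero (Polynomial.C_ne_zero.mpr hm1) ?_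
    exact Monic.ne_zero (monic_prod_of_monic _ _ fun i _ => monic_X_sub_C (u i))
  have hpne : p ≠ 0 := fun h0 => hdne (by rw [h0]; simp)
  -- each element of M is a root of p, with multiplicity count + 1
  have hcount : ∀ w ∈ M.toFinset, M.count w + 1 ≤ p.roots.count w := by
    intro w hw
    rw [Multiset.mem_toFinset, hM] at hw
    obtain ⟨i, _, hi⟩ := Multiset.mem_map.mp hw
    have hwroot : p.IsRoot w := hi ▸ hroot i
    have h1 : (derivative p).rootMultiplicity w = p.rootMultiplicity w - 1 :=
      Polynomial.derivative_rootMultiplicity_of_root hwroot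
    have h2 : 1 ≤ p.rootMultiplicity w := (Polynomial.rootMultiplicity_pos hpne).2 hwroot
    have h3 : M.count w = p.rootMultiplicity w - 1 := by
      rw [← h1, ← Polynomial.count_roots, hderoots]
    rw [Polynomial.count_roots]
    omega
  have hcard2 : m + M.toFinset.card ≤ m + 1 := by
    have h4 : ∑ w ∈ M.toFinset, (M.count w + 1) ≤ ∑ w ∈ M.toFinset, p.roots.count w :=
      Finset.sum_le_sum hcount
    have h5 : ∑ w ∈ M.toFinset, (M.count w + 1) = m + M.toFinset.card := by
      rw [Finset.sum_add_distrib, Multiset.toFinset_sum_count_eq, hcard]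
      simp
    have hsub : M.toFinset ⊆ p.roots.toFinset := by
      intro w hw
      have := hcount w hw
      rw [Multiset.mem_toFinset, ← Multiset.count_pos]
      omega
    have h6 : ∑ w ∈ M.toFinset, p.roots.count w ≤ Multiset.card p.roots :=
      le_trans (Finset.sum_le_sum_of_subset hsub)
        (le_of_eq (Multiset.toFinset_sum_count_eq p.roots))
    have h7 : Multiset.card p.roots ≤ p.natDegree := Polynomial.card_roots' p
    have h8 : p.natDegree ≤ m + 1 := by rw [hp]; exact natDegree_criticalPoly_le u
    omega
  have hMne : M ≠ 0 := by
    have : 0 < Multiset.card M := by omega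
    exact fun h0 => by simp [h0] at this
  have hk1 : M.toFinset.card = 1 := by
    have : 0 < M.toFinset.card := by
      rcases Multiset.exists_mem_of_ne_zero hMne with ⟨w, hw⟩
      exact Finset.card_pos.mpr ⟨w, Multiset.mem_toFinset.mpr hw⟩
    omega
  obtain ⟨w, hw⟩ := Finset.card_eq_one.mp hk1
  have hall : ∀ i, u i = w := by
    intro i
    have : u i ∈ M.toFinset := Multiset.mem_toFinset.mpr (by
      rw [hM]; exact Multiset.mem_map.mpr ⟨i, Finset.mem_univ_val i, rfl⟩)
    rw [hw, Finset.mem_singleton] at this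
    exact this
  -- now p = (X - C w)^(m+1)
  have hprodw : (∏ i : Fin m, (X - C (u i))) = (X - C w) ^ m := by
    calc (∏ i : Fin m, (X - C (u i))) = ∏ _i : Fin m, (X - C w) := by
          refine Finset.prod_congr rfl fun i _ => by rw [hall i]
      _ = (X - C w) ^ m := by rw [Finset.prod_const, Finset.card_univ, Fintype.card_fin]
  have hdg : derivative ((X - C w) ^ (m + 1)) = C ((m:ℂ)+1) * (X - C w) ^ m := by
    rw [Polynomial.derivative_pow, Polynomial.derivative_sub, Polynomial.derivative_X,
      Polynomial.derivative_C]
    push_cast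
    ring
  have hdiff : derivative (p - (X - C w) ^ (m+1)) = 0 := by
    rw [Polynomial.derivative_sub, hd, hprodw, hdg, sub_self]
  have hconst : p - (X - C w)^(m+1) = C ((p - (X - C w)^(m+1)).coeff 0) :=
    Polynomial.eq_C_of_derivative_eq_zero hdiff
  -- evaluate at w : p(w) = 0 since w = u i for some i
  obtain ⟨i0⟩ : Nonempty (Fin m) := ⟨⟨0, hm⟩⟩
  have hpw : p.eval w = 0 := by rw [← hall i0]; exact hroot i0
  have hc0 : (p - (X - C w)^(m+1)).coeff 0 = 0 := by
    have := congrArg (Polynomial.eval w) hconst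
    simpa [hpw] using this.symm
  have hpeq : p = (X - C w)^(m+1) := by
    have := hconst
    rw [hc0, map_zero, sub_eq_zero] at this
    exact this
  have h00 : (0 - w)^(m+1) = 0 := by
    have := criticalPoly_eval_zero u
    rw [← hp, hpeq] at this
    simpa using this
  have hw0 : w = 0 := by simpa using h00
  funext i
  rw [hall i, hw0]
  rfl

theorem theta_proper {m : ℕ} (hm : 1 ≤ m) :
    ∃ c > 0, ∀ u : Fin m → ℂ, c * ‖u‖ ^ (m+1) ≤ ‖Theta u‖ := by
  have hnt : Nontrivial (Fin m → ℂ) :=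
    ⟨⟨0, fun _ => 1, fun h => by have := congrFun h ⟨0, hm⟩; simp at this⟩⟩
  obtain ⟨u0, hu0mem, hu0min⟩ := (isCompact_sphere (0 : Fin m → ℂ) 1).exists_isMinOn
    (NormedSpace.sphere_nonempty.mpr zero_le_one)
    ((continuous_norm.comp (continuous_theta m)).continuousOn)
  set c := ‖Theta u0‖ with hcdef
  have hu0norm : ‖u0‖ = 1 := by simpa using mem_sphere_zero_iff_norm.mp hu0mem
  have hc : 0 < c := by
    rcases lt_or_eq_of_le (norm_nonneg (Theta u0)) with h | h
    · exact h
    · exfalso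
      have : Theta u0 = 0 := norm_eq_zero.mp h.symm
      have := theta_eq_zero_iff hm u0 this
      rw [this] at hu0norm
      simp at hu0norm
  refine ⟨c, hc, fun u => ?_⟩
  rcases eq_or_ne u 0 with rfl | hu
  · simp [zero_pow]
  · have hnu : (0:ℝ) < ‖u‖ := norm_pos_iff.mpr hu
    set t : ℂ := (‖u‖ : ℂ) with htdef
    have ht : t ≠ 0 := by
      rw [htdef]
      exact_mod_cast hnu.ne'
    set u' : Fin m → ℂ := fun j => t⁻¹ * u j with hu'
    have hu'smul : u' = t⁻¹ • u := by funext j; simp [hu']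
    have hnt' : ‖t⁻¹‖ = ‖u‖⁻¹ := by
      rw [htdef, norm_inv, Complex.norm_real, Real.norm_of_nonneg (norm_nonneg u)]
    have hmem : u' ∈ Metric.sphere (0 : Fin m → ℂ) 1 := by
      rw [mem_sphere_zero_iff_norm, hu'smul, norm_smul, hnt']
      field_simp
    have hueq : u = fun j => t * u' j := by
      funext j
      rw [hu']
      field_simp
    have hfac : Theta u = t^(m+1) • Theta u' := by
      funext i
      conv_lhs => rw [hueq]
      rw [theta_smul t u' i]
      rfl
    have hnorm : ‖Theta u‖ = ‖u‖^(m+1) * ‖Theta u'‖ := by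
      rw [hfac, norm_smul, norm_pow, htdef, Complex.norm_real,
        Real.norm_of_nonneg (norm_nonneg u)]
    rw [hnorm]
    have : ‖Theta u0‖ ≤ ‖Theta u'‖ := hu0min hmem
    have hpow : (0:ℝ) ≤ ‖u‖^(m+1) := by positivity
    calc c * ‖u‖^(m+1) = ‖u‖^(m+1) * c := by ring
      _ ≤ ‖u‖^(m+1) * ‖Theta u'‖ := by
          exact mul_le_mul_of_nonneg_left (by simpa [hcdef] using this) hpow

/-- If `v̂` is close to `v`, then any point `û` of `Θ⁻¹(v̂)` is close to some point of
`Θ⁻¹(v)`. -/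
theorem theta_preimage_close
    (n : ℕ) (hn : 2 ≤ n) (v : Fin (n - 1) → ℂ) (ρ : ℝ) (hρ : 0 < ρ) :
    ∃ ν > 0, ∀ vh : Fin (n - 1) → ℂ, ‖v - vh‖ < ν →
      ∀ uh : Fin (n - 1) → ℂ, Theta uh = vh →
        ∃ u : Fin (n - 1) → ℂ, Theta u = v ∧ ‖u - uh‖ < ρ := by
  have hm : 1 ≤ n - 1 := by omega
  by_contra hcon
  push_neg at hcon
  have hseq : ∀ k : ℕ, ∃ vh : Fin (n-1) → ℂ, ‖v - vh‖ < 1/(k+1) ∧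
      ∃ uh : Fin (n-1) → ℂ, Theta uh = vh ∧ ∀ u : Fin (n-1) → ℂ, Theta u = v → ρ ≤ ‖u - uh‖ := by
    intro k
    exact hcon (1/(k+1)) (by positivity)
  choose vh hvh uh huh hfar using hseq
  obtain ⟨c, hc, hprop⟩ := theta_proper (m := n-1) hm
  -- uniform bound on ‖uh k‖
  set R : ℝ := max 1 ((‖v‖ + 1)/c) with hR
  have hbound : ∀ k, ‖uh k‖ ≤ R := by
    intro k
    have h1 : ‖vh k‖ ≤ ‖v‖ + 1 := by
      have h2 : ‖vh k‖ - ‖v‖ ≤ ‖v - vh k‖ := by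
        have := norm_sub_norm_le (v - vh k) v
        simp at this
        calc ‖vh k‖ - ‖v‖ ≤ ‖vh k - v‖ := by
              have := norm_sub_norm_le (vh k) v; linarith
          _ = ‖v - vh k‖ := by rw [norm_sub_rev]
      have h3 : ‖v - vh k‖ ≤ 1 := le_of_lt ((hvh k).trans_le (by
        rw [div_le_one (by positivity)]; norm_num))
      linarith
    have h4 : c * ‖uh k‖^(n-1+1) ≤ ‖v‖ + 1 := by
      calc c * ‖uh k‖^(n-1+1) ≤ ‖Theta (uh k)‖ := hprop (uh k)
        _ = ‖vh k‖ := by rw [huh k]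
        _ ≤ ‖v‖ + 1 := h1
    have h5 : ‖uh k‖^(n-1+1) ≤ (‖v‖ + 1)/c := by
      rw [le_div_iff₀ hc]; linarith
    rcases le_or_gt ‖uh k‖ 1 with h | h
    · exact h.trans (le_max_left _ _)
    · have h6 : ‖uh k‖ ≤ ‖uh k‖^(n-1+1) := le_self_pow₀ h.le (Nat.succ_ne_zero (n-1))
      exact (h6.trans h5).trans (le_max_right _ _)
  -- extract convergent subsequence
  have hmem : ∀ k, uh k ∈ Metric.closedBall (0 : Fin (n-1) → ℂ) R := by
    intro k
    rw [Metric.mem_closedBall, dist_zero_right]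
    exact hbound k
  obtain ⟨ulim, _hulim, φ, hφ, htend⟩ :=
    (isCompact_closedBall (0 : Fin (n-1) → ℂ) R).tendsto_subseq hmem
  -- vh → v
  have hvtend : Filter.Tendsto vh Filter.atTop (nhds v) := by
    rw [tendsto_iff_norm_sub_tendsto_zero]
    refine squeeze_zero (g := fun k : ℕ => 1/((k:ℝ)+1)) (fun k => norm_nonneg _) (fun k => ?_) ?_
    · exact le_of_lt (by rw [norm_sub_rev]; exact hvh k)
    · exact tendsto_one_div_add_atTop_nhds_zero_nat
  have hvtendsub : Filter.Tendsto (vh ∘ φ) Filter.atTop (nhds v) :=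
    hvtend.comp hφ.tendsto_atTop
  have hthetatend : Filter.Tendsto (Theta ∘ uh ∘ φ) Filter.atTop (nhds (Theta ulim)) :=
    ((continuous_theta (n-1)).tendsto ulim).comp htend
  have hthetaeq : Theta ∘ uh ∘ φ = vh ∘ φ := by
    funext k; exact huh (φ k)
  have hEq : Theta ulim = v := by
    rw [hthetaeq] at hthetatend
    exact tendsto_nhds_unique hthetatend hvtendsub
  -- contradiction with hfar
  have hclose : ∀ᶠ k in Filter.atTop, dist (uh (φ k)) ulim < ρ :=
    (Metric.tendsto_nhds.mp htend ρ hρ)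
  obtain ⟨k, hk⟩ := hclose.exists
  have := hfar (φ k) ulim hEq
  rw [← dist_eq_norm, dist_comm] at this
  linarith
end

section
/- Let (f,G) be a generalized finite Blaschke product, let η > 0, and let G' ⊆ G be a compact set containing no zeros of f'. Then there exists τ > 0 such that for every function g analytic on G satisfying |f(z) − g(z)| < τ for all z ∈ G, the following two statements hold: (1) for every z₀ ∈ G' and every w ∈ ℂ with |w − f(z₀)| < τ, there exists z₁ ∈ G with |z₁ − z₀| < η and g(z₁) = w; (2) for every z₀ ∈ G' and every w ∈ ℂ with |w − g(z₀)| < τ, there exists z₁ ∈ G with |z₁ − z₀| < η and f(z₁) = w. -/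
open Metric Set

lemma attains (h : ℂ → ℂ) (z₀ : ℂ) (r c : ℝ) (hr : 0 < r)
    (hd : DifferentiableOn ℂ h (closedBall z₀ r))
    (w : ℂ) (hc : ∀ z ∈ sphere z₀ r, c ≤ ‖h z - w‖)
    (h0 : ‖h z₀ - w‖ < c) :
    ∃ z ∈ closedBall z₀ r, h z = w := by
  by_contra hcon
  push_neg at hcon
  have hc0 : 0 < c := lt_of_le_of_lt (norm_nonneg _) h0
  have hne : ∀ z ∈ closedBall z₀ r, h z - w ≠ 0 := fun z hz => sub_ne_zero.2 (hcon z hz)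
  have hFd : DifferentiableOn ℂ (fun z => (h z - w)⁻¹) (closedBall z₀ r) :=
    (hd.sub (differentiableOn_const w)).inv hne
  have hz₀ : z₀ ∈ closedBall z₀ r := mem_closedBall_self hr.le
  have key : ‖(h z₀ - w)⁻¹‖ ≤ c⁻¹ := by
    refine Complex.norm_le_of_forall_mem_frontier_norm_le (U := ball z₀ r)
      isBounded_ball ⟨hFd.mono ball_subset_closedBall, ?_⟩ ?_ ?_
    · rw [closure_ball z₀ hr.ne']
      exact hFd.continuousOn
    · intro z hz
      rw [frontier_ball z₀ hr.ne'] at hz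
      rw [norm_inv]
      exact inv_anti₀ hc0 (hc z hz)
    · rw [closure_ball z₀ hr.ne']; exact hz₀
  rw [norm_inv] at key
  have hpos : 0 < ‖h z₀ - w‖ := norm_pos_iff.2 (hne z₀ hz₀)
  have := (inv_le_inv₀ hpos hc0).1 key
  linarith

lemma taylor_bound (f : ℂ → ℂ) (z₀ : ℂ) (δ C : ℝ) (hδ : 0 ≤ δ)
    (hder : ∀ x ∈ closedBall z₀ δ, HasDerivAt f (deriv f x) x)
    (hb : ∀ x ∈ closedBall z₀ δ, ‖deriv f x - deriv f z₀‖ ≤ C)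
    (z : ℂ) (hz : z ∈ closedBall z₀ δ) :
    ‖f z - f z₀ - deriv f z₀ * (z - z₀)‖ ≤ C * ‖z - z₀‖ := by
  have := (convex_closedBall z₀ δ).norm_image_sub_le_of_norm_hasDerivWithin_le
    (f := fun y => f y - f z₀ - deriv f z₀ * (y - z₀))
    (f' := fun x => deriv f x - deriv f z₀)
    (fun x hx => by
      have h1 : HasDerivAt (fun y : ℂ => deriv f z₀ * (y - z₀)) (deriv f z₀) x := by
        simpa using (((hasDerivAt_id x).sub_const z₀).const_mul (deriv f z₀))
      exact ((((hder x hx).sub_const (f z₀)).sub h1)).hasDerivWithinAt)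
    hb (mem_closedBall_self hδ) hz
  simpa using this

/-- `(f, G)` is a generalized finite Blaschke product: `G` is open, bounded and simply
connected, `f` is analytic on an open neighborhood of the closure of `G`, `|f| = 1` on the
boundary of `G`, and `f' ≠ 0` on the boundary of `G`. -/
structure IsGFBP (f : ℂ → ℂ) (G : Set ℂ) : Prop where
  isOpen : IsOpen G
  nonempty : G.Nonempty
  bounded : Bornology.IsBounded G
  simplyConnected : SimplyConnectedSpace G
  analytic : ∃ U : Set ℂ, IsOpen U ∧ closure G ⊆ U ∧ ∀ z ∈ U, AnalyticAt ℂ f z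
  boundary_mod : ∀ z ∈ frontier G, ‖f z‖ = 1
  boundary_deriv : ∀ z ∈ frontier G, deriv f z ≠ 0

/-- If `g` is analytic on `G` and uniformly close to `f` on `G`, then near any point `z₀`
of a compact set `G' ⊆ G` free of critical points of `f`, `g` attains every value close to
`f(z₀)` and `f` attains every value close to `g(z₀)`. -/
theorem close_functions_attain_close_values
    (f : ℂ → ℂ) (G : Set ℂ) (hfG : IsGFBP f G)
    (η : ℝ) (hη : 0 < η)
    (G' : Set ℂ) (hG'sub : G' ⊆ G) (hG'cpt : IsCompact G')
    (hG'crit : ∀ z ∈ G', deriv f z ≠ 0) :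
    ∃ τ > 0, ∀ g : ℂ → ℂ, (∀ z ∈ G, AnalyticAt ℂ g z) →
      (∀ z ∈ G, ‖f z - g z‖ < τ) →
      (∀ z₀ ∈ G', ∀ w : ℂ, ‖w - f z₀‖ < τ →
        ∃ z₁ ∈ G, ‖z₁ - z₀‖ < η ∧ g z₁ = w) ∧
      (∀ z₀ ∈ G', ∀ w : ℂ, ‖w - g z₀‖ < τ →
        ∃ z₁ ∈ G, ‖z₁ - z₀‖ < η ∧ f z₁ = w) := by
  rcases G'.eq_empty_or_nonempty with rfl | hne
  · exact ⟨1, one_pos, fun g _ _ => ⟨fun z₀ h => absurd h (notMem_empty z₀),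
      fun z₀ h => absurd h (notMem_empty z₀)⟩⟩
  obtain ⟨U, hUopen, hGU, hfa⟩ := hfG.analytic
  have hGsubU : G ⊆ U := subset_closure.trans hGU
  have hderivA : AnalyticOnNhd ℂ (deriv f) U := AnalyticOnNhd.deriv hfa
  have hderivC : ∀ z ∈ U, ContinuousAt (deriv f) z := fun z hz => (hderivA z hz).continuousAt
  -- minimum of ‖deriv f‖ on G'
  obtain ⟨m, hm0, hmle⟩ : ∃ m > 0, ∀ z ∈ G', m ≤ ‖deriv f z‖ := by
    obtain ⟨zm, hzm, hzmin⟩ := hG'cpt.exists_isMinOn hne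
      (fun z hz => ((hderivC z (hGsubU (hG'sub hz))).norm).continuousWithinAt)
    exact ⟨‖deriv f zm‖, norm_pos_iff.2 (hG'crit zm hzm), fun z hz => hzmin hz⟩
  -- a good radius δ
  obtain ⟨δ, hδ0, hδη, hballG, hclose_deriv⟩ :
      ∃ δ > 0, δ ≤ η/2 ∧ (∀ z₀ ∈ G', closedBall z₀ δ ⊆ G) ∧
        (∀ z₀ ∈ G', ∀ x ∈ closedBall z₀ δ, ‖deriv f x - deriv f z₀‖ ≤ m/2) := by
    obtain ⟨δ₀, hδ₀, hth⟩ := hG'cpt.exists_thickening_subset_open hfG.isOpen hG'sub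
    have hKcpt : IsCompact (cthickening (δ₀/2) G') := hG'cpt.cthickening
    have hKG : cthickening (δ₀/2) G' ⊆ G :=
      (cthickening_subset_thickening' hδ₀ (by linarith) G').trans hth
    have hucont : UniformContinuousOn (deriv f) (cthickening (δ₀/2) G') :=
      hKcpt.uniformContinuousOn_of_continuous
        (fun z hz => (hderivC z (hGsubU (hKG hz))).continuousWithinAt)
    obtain ⟨δ₁, hδ₁, hud⟩ := Metric.uniformContinuousOn_iff_le.1 hucont (m/2) (by linarith)
    refine ⟨min δ₁ (min (δ₀/2) (η/2)), lt_min hδ₁ (lt_min (by linarith) (by linarith)),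
      (min_le_right _ _).trans (min_le_right _ _), ?_, ?_⟩
    · intro z₀ hz₀ z hz
      refine hKG (mem_cthickening_of_dist_le z z₀ _ _ hz₀ ?_)
      exact (mem_closedBall.1 hz).trans ((min_le_right _ _).trans (min_le_left _ _))
    · intro z₀ hz₀ x hx
      have hxK : x ∈ cthickening (δ₀/2) G' :=
        mem_cthickening_of_dist_le x z₀ _ _ hz₀
          ((mem_closedBall.1 hx).trans ((min_le_right _ _).trans (min_le_left _ _)))
      have hz₀K : z₀ ∈ cthickening (δ₀/2) G' :=
        self_subset_cthickening G' hz₀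
      have := hud x hxK z₀ hz₀K ((mem_closedBall.1 hx).trans (min_le_left _ _))
      simpa [dist_eq_norm] using this
  -- main estimate: on the sphere, |f z - f z₀| ≥ m*δ/2
  have hsphere : ∀ z₀ ∈ G', ∀ z ∈ sphere z₀ δ, m * δ / 2 ≤ ‖f z - f z₀‖ := by
    intro z₀ hz₀ z hz
    have hzball : z ∈ closedBall z₀ δ := sphere_subset_closedBall hz
    have hmv := taylor_bound f z₀ δ (m/2) hδ0.le
      (fun x hx => ((hfa x (hGsubU (hballG z₀ hz₀ hx))).differentiableAt).hasDerivAt)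
      (hclose_deriv z₀ hz₀) z hzball
    have hznorm : ‖z - z₀‖ = δ := by
      have := mem_sphere_iff_norm.1 hz
      simpa using this
    rw [hznorm] at hmv
    have h2 : m * δ ≤ ‖deriv f z₀ * (z - z₀)‖ := by
      rw [norm_mul, hznorm]
      exact mul_le_mul_of_nonneg_right (hmle z₀ hz₀) hδ0.le
    have h3 : ‖deriv f z₀ * (z - z₀)‖ - ‖f z - f z₀‖ ≤ (m/2) * δ :=
      calc ‖deriv f z₀ * (z - z₀)‖ - ‖f z - f z₀‖
          ≤ ‖deriv f z₀ * (z - z₀) - (f z - f z₀)‖ := norm_sub_norm_le _ _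
        _ = ‖f z - f z₀ - deriv f z₀ * (z - z₀)‖ := norm_sub_rev _ _
        _ ≤ (m/2) * δ := hmv
    linarith
  -- choose τ = m*δ/8
  refine ⟨m * δ / 8, by positivity, fun g hga hclose => ?_⟩
  constructor
  · intro z₀ hz₀ w hw
    obtain ⟨z₁, hz₁ball, hz₁⟩ := attains g z₀ δ (m * δ / 4) hδ0
      (fun x hx => ((hga x (hballG z₀ hz₀ hx)).differentiableAt).differentiableWithinAt) w
      (fun z hz => by
        have hzG : z ∈ G := hballG z₀ hz₀ (sphere_subset_closedBall hz)
        have h1 := hsphere z₀ hz₀ z hz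
        have h2 := hclose z hzG
        have h4 : ‖f z - f z₀‖ ≤ ‖f z - g z‖ + ‖g z - w‖ + ‖w - f z₀‖ := by
          have := norm_add₃_le (a := f z - g z) (b := g z - w) (c := w - f z₀)
          simpa using this
        linarith)
      (by
        have h2 := hclose z₀ (hG'sub hz₀)
        have h4 : ‖g z₀ - w‖ ≤ ‖g z₀ - f z₀‖ + ‖f z₀ - w‖ := norm_sub_le_norm_sub_add_norm_sub _ _ _
        rw [norm_sub_rev (g z₀) (f z₀), norm_sub_rev (f z₀) w] at h4
        linarith)
    refine ⟨z₁, hballG z₀ hz₀ hz₁ball, ?_, hz₁⟩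
    calc ‖z₁ - z₀‖ ≤ δ := by simpa [dist_eq_norm] using mem_closedBall.1 hz₁ball
      _ < η := by linarith
  · intro z₀ hz₀ w hw
    obtain ⟨z₁, hz₁ball, hz₁⟩ := attains f z₀ δ (m * δ / 4) hδ0
      (fun x hx => ((hfa x (hGsubU (hballG z₀ hz₀ hx))).differentiableAt).differentiableWithinAt) w
      (fun z hz => by
        have h1 := hsphere z₀ hz₀ z hz
        have h2 := hclose z₀ (hG'sub hz₀)
        have h4 : ‖f z - f z₀‖ ≤ ‖f z - w‖ + ‖w - g z₀‖ + ‖g z₀ - f z₀‖ := by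
          have := norm_add₃_le (a := f z - w) (b := w - g z₀) (c := g z₀ - f z₀)
          simpa using this
        rw [norm_sub_rev (g z₀) (f z₀)] at h4
        linarith)
      (by
        have h2 := hclose z₀ (hG'sub hz₀)
        have h4 : ‖f z₀ - w‖ ≤ ‖f z₀ - g z₀‖ + ‖g z₀ - w‖ := norm_sub_le_norm_sub_add_norm_sub _ _ _
        rw [norm_sub_rev (g z₀) w] at h4
        linarith)
    refine ⟨z₁, hballG z₀ hz₀ hz₁ball, ?_, hz₁⟩
    calc ‖z₁ - z₀‖ ≤ δ := by simpa [dist_eq_norm] using mem_closedBall.1 hz₁ball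
      _ < η := by linarith
end

section
/- Let D ⊆ ℂ be an open simply connected set, let f be a nonconstant meromorphic function on D, let ε > 0, and let Λ be a connected component of {z ∈ D : |f(z)| = ε} which is compact (in particular Λ ⊆ D and Λ does not meet the boundary of D) and which contains no zero of f'. Then Λ is homeomorphic to the unit circle. -/
open scoped Topology

/-- `f` has a pole at `z`: `|f| → ∞` as we approach `z` from punctured neighborhoods. -/
def HasPoleAt (f : ℂ → ℂ) (z : ℂ) : Prop :=
  Filter.Tendsto (fun w => ‖f w‖) (𝓝[≠] z) Filter.atTop

/-- The level set `{z ∈ D : |f z| = ε}` (poles, where `|f| = ∞`, are excluded). -/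
def levelSet (f : ℂ → ℂ) (D : Set ℂ) (ε : ℝ) : Set ℂ :=
  {z | z ∈ D ∧ ¬ HasPoleAt f z ∧ ‖f z‖ = ε}

/-- `C` is a connected component of the set `S`. -/
def IsCompOf (C S : Set ℂ) : Prop :=
  ∃ x ∈ S, C = connectedComponentIn S x

namespace LevelCurve

open Set Real Filter

noncomputable section

/-- The standard parametrization of the circle of radius `ε`. -/
def qc (ε : ℝ) (t : ℝ) : ℂ := (ε : ℂ) * Complex.exp (t * Complex.I)

lemma qc_continuous (ε : ℝ) : Continuous (qc ε) := by
  unfold qc; fun_prop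

lemma qc_abs (ε : ℝ) (hε : 0 ≤ ε) (t : ℝ) : ‖qc ε t‖ = ε := by
  simp [qc, Complex.norm_exp, abs_of_nonneg hε]

lemma qc_mem_sphere (ε : ℝ) (hε : 0 ≤ ε) (t : ℝ) : qc ε t ∈ Metric.sphere (0 : ℂ) ε := by
  simp [Complex.dist_eq, qc_abs ε hε t]

lemma qc_ne_zero {ε : ℝ} (hε : 0 < ε) (t : ℝ) : qc ε t ≠ 0 := by
  intro h
  have h2 := qc_abs ε hε.le t
  rw [h] at h2
  simp only [norm_zero] at h2
  linarith

lemma two_sin_mul_I (z : ℂ) :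
    2 * Complex.sin z * Complex.I = Complex.exp (z * Complex.I) - Complex.exp (-z * Complex.I) := by
  rw [Complex.sin]
  linear_combination (Complex.exp (-z * Complex.I) - Complex.exp (z * Complex.I)) * Complex.I_sq

lemma abs_exp_mul_I_sub_one (θ : ℝ) :
    ‖Complex.exp (θ * Complex.I) - 1‖ = 2 * |Real.sin (θ / 2)| := by
  have key : Complex.exp (θ * Complex.I) - 1
      = Complex.exp (((θ : ℂ)/2) * Complex.I) * (2 * Complex.sin ((θ : ℂ)/2) * Complex.I) := by
    rw [two_sin_mul_I, mul_sub, ← Complex.exp_add, ← Complex.exp_add]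
    have e1 : (θ : ℂ)/2 * Complex.I + (θ : ℂ)/2 * Complex.I = (θ : ℂ) * Complex.I := by ring
    have e2 : (θ : ℂ)/2 * Complex.I + -((θ : ℂ)/2) * Complex.I = 0 := by ring
    rw [e1, e2, Complex.exp_zero]
  rw [key, norm_mul, norm_mul, norm_mul]
  have h1 : ‖Complex.exp (((θ : ℂ)/2) * Complex.I)‖ = 1 := by
    rw [Complex.norm_exp]
    norm_num
  have h2 : Complex.sin ((θ : ℂ)/2) = ((Real.sin (θ/2) : ℝ) : ℂ) := by
    rw [Complex.ofReal_sin]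
    push_cast
    ring_nf
  rw [h1, h2, Complex.norm_real, Real.norm_eq_abs, Complex.norm_I, Complex.norm_two]
  ring

/-- chord length formula -/
lemma qc_dist (ε : ℝ) (hε : 0 ≤ ε) (s t : ℝ) :
    ‖qc ε s - qc ε t‖ = 2 * ε * |Real.sin ((s - t) / 2)| := by
  have key : qc ε s - qc ε t = qc ε t * (Complex.exp ((↑(s - t) : ℂ) * Complex.I) - 1) := by
    unfold qc
    rw [mul_sub]
    push_cast
    rw [mul_assoc, ← Complex.exp_add]
    ring_nf
  rw [key, norm_mul, qc_abs ε hε, abs_exp_mul_I_sub_one]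
  ring

lemma qc_exists_eq {ε : ℝ} (hε : 0 < ε) {w : ℂ} (hw : ‖w‖ = ε) (t₀ : ℝ) :
    ∃ a : ℝ, |a| ≤ π ∧ qc ε (t₀ + a) = w := by
  have hq0 : qc ε t₀ ≠ 0 := qc_ne_zero hε t₀
  set a := Complex.arg (w / qc ε t₀) with ha
  refine ⟨a, abs_le.mpr ⟨(Complex.neg_pi_lt_arg _).le, Complex.arg_le_pi _⟩, ?_⟩
  have habs1 : ‖w / qc ε t₀‖ = 1 := by
    rw [norm_div, hw, qc_abs ε hε.le]
    exact div_self hε.ne'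
  have hexp : Complex.exp ((a : ℂ) * Complex.I) = w / qc ε t₀ := by
    have := Complex.norm_mul_exp_arg_mul_I (w / qc ε t₀)
    rwa [habs1, Complex.ofReal_one, one_mul] at this
  have hsplit : qc ε (t₀ + a) = qc ε t₀ * Complex.exp ((a : ℂ) * Complex.I) := by
    unfold qc
    push_cast
    rw [add_mul, Complex.exp_add]
    ring
  rw [hsplit, hexp, mul_div_cancel₀ _ hq0]

lemma qc_add_int_mul_two_pi (ε : ℝ) (t : ℝ) (n : ℤ) : qc ε (t + n * (2 * π)) = qc ε t := by
  unfold qc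
  congr 1
  push_cast
  rw [add_mul, Complex.exp_add]
  have e : ((n : ℂ) * (2 * (π : ℂ))) * Complex.I = (n : ℂ) * (2 * (π : ℂ) * Complex.I) := by ring
  rw [e, Complex.exp_int_mul_two_pi_mul_I, mul_one]

lemma qc_eq_iff {ε : ℝ} (hε : 0 < ε) {s t : ℝ} (h : qc ε s = qc ε t) :
    ∃ n : ℤ, s - t = n * (2 * π) := by
  unfold qc at h
  have h1 : Complex.exp ((s : ℂ) * Complex.I) = Complex.exp ((t : ℂ) * Complex.I) :=
    mul_left_cancel₀ (by exact_mod_cast hε.ne') h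
  have h2 : Complex.exp (((s : ℂ) - t) * Complex.I) = 1 := by
    rw [sub_mul, Complex.exp_sub, h1, div_self (Complex.exp_ne_zero _)]
  obtain ⟨n, hn⟩ := Complex.exp_eq_one_iff.mp h2
  refine ⟨n, ?_⟩
  have h3 : ((s : ℂ) - t) = n * (2 * π) := by
    have hI : (Complex.I : ℂ) ≠ 0 := Complex.I_ne_zero
    have e : ((n : ℂ)) * (2 * (π : ℂ) * Complex.I) = ((n : ℂ) * (2 * (π : ℂ))) * Complex.I := by
      ring
    rw [e] at hn
    exact mul_right_cancel₀ hI hn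
  exact_mod_cast h3

lemma mem_sphere_iff_abs {w : ℂ} {ε : ℝ} :
    w ∈ Metric.sphere (0 : ℂ) ε ↔ ‖w‖ = ε := by
  simp [Complex.dist_eq]

lemma abs_sin_of_abs_le_pi {x : ℝ} (hx : |x| ≤ π) : |Real.sin x| = Real.sin |x| := by
  rcases le_or_gt 0 x with h | h
  · rw [abs_of_nonneg h] at hx ⊢
    rw [abs_of_nonneg (Real.sin_nonneg_of_nonneg_of_le_pi h hx)]
  · have h1 : |Real.sin x| = |Real.sin (-x)| := by rw [Real.sin_neg, abs_neg]
    rw [abs_of_neg h] at hx ⊢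
    rw [h1, abs_of_nonneg (Real.sin_nonneg_of_nonneg_of_le_pi (by linarith) hx)]

lemma sin_half_lt_sin_half {u v : ℝ} (hu : 0 ≤ u) (huv : u < v) (hv : v ≤ π) :
    Real.sin (u / 2) < Real.sin (v / 2) := by
  have hπ := Real.pi_pos
  exact Real.strictMonoOn_sin ⟨by linarith, by linarith⟩ ⟨by linarith, by linarith⟩ (by linarith)

lemma sin_half_le_sin_half {u v : ℝ} (hu : 0 ≤ u) (huv : u ≤ v) (hv : v ≤ π) :
    Real.sin (u / 2) ≤ Real.sin (v / 2) := by
  rcases eq_or_lt_of_le huv with rfl | h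
  · exact le_rfl
  · exact (sin_half_lt_sin_half hu h hv).le

lemma not_hasPoleAt_of_analyticAt {f : ℂ → ℂ} {z : ℂ} (h : AnalyticAt ℂ f z) :
    ¬ HasPoleAt f z := by
  intro hp
  have h1 : Filter.Tendsto (fun w => ‖f w‖) (𝓝[≠] z) (𝓝 (‖f z‖)) :=
    tendsto_nhdsWithin_of_tendsto_nhds
      ((continuous_norm.tendsto _).comp h.continuousAt)
  exact not_tendsto_atTop_of_tendsto_nhds h1 hp

/-- All the standing hypotheses of the main theorem that we actually use. -/
structure Setup (D : Set ℂ) (f : ℂ → ℂ) (ε : ℝ) (Λ : Set ℂ) : Prop where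
  hD : IsOpen D
  hgen : ∀ z ∈ D, AnalyticAt ℂ f z ∨ HasPoleAt f z
  hε : 0 < ε
  hΛ : IsCompOf Λ (levelSet f D ε)
  hcpt : IsCompact Λ
  hcrit : ∀ z ∈ Λ, deriv f z ≠ 0

namespace Setup

variable {D : Set ℂ} {f : ℂ → ℂ} {ε : ℝ} {Λ : Set ℂ} (st : Setup D f ε Λ)
include st

lemma subset_level : Λ ⊆ levelSet f D ε := by
  obtain ⟨x, hx, rfl⟩ := st.hΛ
  exact connectedComponentIn_subset _ _

lemma analyticAt {z : ℂ} (hz : z ∈ Λ) : AnalyticAt ℂ f z := by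
  obtain ⟨hD, hnp, -⟩ := st.subset_level hz
  exact (st.hgen z hD).resolve_right hnp

lemma abs_eq {z : ℂ} (hz : z ∈ Λ) : ‖f z‖ = ε := (st.subset_level hz).2.2

lemma contOn : ContinuousOn f Λ :=
  fun _ hz => (st.analyticAt hz).continuousAt.continuousWithinAt

lemma isPreconnected : IsPreconnected Λ := by
  obtain ⟨x, hx, rfl⟩ := st.hΛ
  exact isPreconnected_connectedComponentIn

lemma eq_component {z : ℂ} (hz : z ∈ Λ) : connectedComponentIn (levelSet f D ε) z = Λ := by
  obtain ⟨x, hx, rfl⟩ := st.hΛ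
  exact (connectedComponentIn_eq hz).symm

end Setup

/-- A chart for the level curve `Λ` around a point `z₀ = ψ (q t₀)`. -/
structure Chart (f : ℂ → ℂ) (Λ : Set ℂ) (ε : ℝ) (z₀ : ℂ) (t₀ : ℝ) where
  V : Set ℂ
  ψ : ℂ → ℂ
  ρ : ℝ
  δ : ℝ
  openV : IsOpen V
  memV : z₀ ∈ V
  ρpos : 0 < ρ
  δpos : 0 < δ
  δlt : δ < π
  arc : Metric.sphere (0 : ℂ) ε ∩ Metric.ball (f z₀) ρ = qc ε '' Set.Ioo (t₀ - δ) (t₀ + δ)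
  map_mem : ∀ z ∈ Λ ∩ V,
    f z ∈ Metric.sphere (0 : ℂ) ε ∩ Metric.ball (f z₀) ρ ∧ ψ (f z) = z
  inv_mem : ∀ w ∈ Metric.sphere (0 : ℂ) ε ∩ Metric.ball (f z₀) ρ,
    ψ w ∈ Λ ∩ V ∧ f (ψ w) = w
  cont : ContinuousOn ψ (Metric.sphere (0 : ℂ) ε ∩ Metric.ball (f z₀) ρ)

variable {D : Set ℂ} {f : ℂ → ℂ} {ε : ℝ} {Λ : Set ℂ}

set_option maxHeartbeats 2000000 in
lemma Setup.exists_chart (st : Setup D f ε Λ) {z₀ : ℂ} (hz₀ : z₀ ∈ Λ) {t₀ : ℝ}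
    (ht₀ : qc ε t₀ = f z₀) : Nonempty (Chart f Λ ε z₀ t₀) := by
  classical
  have hε := st.hε
  have hπ := Real.pi_pos
  obtain ⟨hzD, hnp, habs⟩ := st.subset_level hz₀
  have han : AnalyticAt ℂ f z₀ := (st.hgen z₀ hzD).resolve_right hnp
  have hsd : HasStrictDerivAt f (deriv f z₀) z₀ := by
    obtain ⟨p, hp⟩ := han
    have h := hp.hasStrictDerivAt
    rwa [← h.hasDerivAt.deriv] at h
  have hd : deriv f z₀ ≠ 0 := st.hcrit z₀ hz₀
  set e := (hsd.hasStrictFDerivAt_equiv hd).toOpenPartialHomeomorph f with he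
  have hecoe : (e : ℂ → ℂ) = f :=
    (hsd.hasStrictFDerivAt_equiv hd).toOpenPartialHomeomorph_coe
  have hz₀src : z₀ ∈ e.source :=
    (hsd.hasStrictFDerivAt_equiv hd).mem_toOpenPartialHomeomorph_source
  have hVano : IsOpen {z | AnalyticAt ℂ f z} := isOpen_analyticAt ℂ f
  set V' := e.source ∩ ({z | AnalyticAt ℂ f z} ∩ D) with hV'def
  have hV'o : IsOpen V' := e.open_source.inter (hVano.inter st.hD)
  have hz₀V' : z₀ ∈ V' := ⟨hz₀src, han, hzD⟩
  have hV'src : V' ⊆ e.source := Set.inter_subset_left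
  have hfcV' : ContinuousOn f V' := fun z hz => hz.2.1.continuousAt.continuousWithinAt
  set W := e.target ∩ (e.symm : ℂ → ℂ) ⁻¹' V' with hWdef
  have hWo : IsOpen W := e.symm.continuousOn.isOpen_inter_preimage e.open_target hV'o
  have hfz₀W : f z₀ ∈ W := by
    constructor
    · have h1 := e.map_source hz₀src
      rwa [show (e : ℂ → ℂ) z₀ = f z₀ from congrFun hecoe z₀] at h1
    · have h2 := e.left_inv hz₀src
      rw [show (e : ℂ → ℂ) z₀ = f z₀ from congrFun hecoe z₀] at h2
      rw [Set.mem_preimage, h2]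
      exact hz₀V'
  obtain ⟨r, hr0, hrW⟩ := Metric.isOpen_iff.mp hWo _ hfz₀W
  set δ := min (π / 2) (r / (2 * ε)) with hδdef
  have hδ0 : 0 < δ := lt_min (by positivity) (by positivity)
  have hδπ2 : δ ≤ π / 2 := min_le_left _ _
  have hδπ : δ < π := lt_of_le_of_lt hδπ2 (by linarith)
  set ρ := 2 * ε * Real.sin (δ / 2) with hρdef
  have hρ0 : 0 < ρ := by
    have h3 : 0 < Real.sin (δ / 2) :=
      Real.sin_pos_of_pos_of_lt_pi (by linarith) (by linarith)
    positivity
  have hρr : ρ < r := by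
    have h1 : Real.sin (δ / 2) < δ / 2 := Real.sin_lt (by linarith)
    have h2 : δ ≤ r / (2 * ε) := min_le_right _ _
    have h4 : 2 * ε * δ ≤ r := by
      rw [le_div_iff₀ (by positivity : (0:ℝ) < 2 * ε)] at h2
      linarith
    nlinarith [h1, h4, hε, hr0]
  set A := Metric.sphere (0 : ℂ) ε ∩ Metric.ball (f z₀) ρ with hAdef
  have harc : A = qc ε '' Set.Ioo (t₀ - δ) (t₀ + δ) := by
    ext w
    constructor
    · rintro ⟨hws, hwb⟩
      have hwa : ‖w‖ = ε := mem_sphere_iff_abs.mp hws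
      obtain ⟨a, haπ, hqa⟩ := qc_exists_eq hε hwa t₀
      have hdist : ‖w - f z₀‖ < ρ := by
        rwa [Metric.mem_ball, Complex.dist_eq] at hwb
      have hchord : ‖w - f z₀‖ = 2 * ε * |Real.sin (a / 2)| := by
        rw [← hqa, ← ht₀, qc_dist ε hε.le, show t₀ + a - t₀ = a by ring]
      have hsin : |Real.sin (a / 2)| < Real.sin (δ / 2) := by
        rw [hchord] at hdist
        rw [hρdef] at hdist
        nlinarith
      have haδ : |a| < δ := by
        by_contra hcon
        push_neg at hcon
        have h5 : |a / 2| ≤ π := by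
          rw [abs_div, abs_of_pos (by norm_num : (0:ℝ) < 2)]
          linarith [abs_nonneg a, haπ]
        have h6 : |Real.sin (a / 2)| = Real.sin (|a| / 2) := by
          rw [abs_sin_of_abs_le_pi h5, abs_div, abs_of_pos (by norm_num : (0:ℝ) < 2)]
        have h7 : Real.sin (δ / 2) ≤ Real.sin (|a| / 2) :=
          sin_half_le_sin_half hδ0.le hcon haπ
        rw [h6] at hsin
        linarith
      refine ⟨t₀ + a, ?_, hqa⟩
      obtain ⟨ha1, ha2⟩ := abs_lt.mp haδ
      exact ⟨by linarith, by linarith⟩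
    · rintro ⟨t, ht, rfl⟩
      refine ⟨qc_mem_sphere ε hε.le t, ?_⟩
      rw [Metric.mem_ball, Complex.dist_eq, ← ht₀, qc_dist ε hε.le]
      have h5 : |t - t₀| < δ := by
        rw [abs_lt]
        exact ⟨by linarith [ht.1], by linarith [ht.2]⟩
      have h6 : |Real.sin ((t - t₀) / 2)| = Real.sin (|t - t₀| / 2) := by
        rw [abs_sin_of_abs_le_pi (by rw [abs_div, abs_of_pos (by norm_num : (0:ℝ) < 2)]; linarith [abs_nonneg (t - t₀)]),
          abs_div, abs_of_pos (by norm_num : (0:ℝ) < 2)]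
      rw [h6, hρdef]
      have h7 : Real.sin (|t - t₀| / 2) < Real.sin (δ / 2) :=
        sin_half_lt_sin_half (abs_nonneg _) h5 (by linarith)
      nlinarith
  have hAW : A ⊆ W := by
    intro w hw
    apply hrW
    rw [Metric.mem_ball]
    calc dist w (f z₀) < ρ := hw.2
    _ < r := hρr
  have hAtgt : A ⊆ e.target := fun w hw => (hAW hw).1
  have hsymmV' : ∀ w ∈ A, (e.symm : ℂ → ℂ) w ∈ V' ∧ f ((e.symm : ℂ → ℂ) w) = w := by
    intro w hw
    refine ⟨(hAW hw).2, ?_⟩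
    conv_lhs => rw [← hecoe]
    exact e.right_inv (hAtgt hw)
  have hfz₀A : f z₀ ∈ A := ⟨mem_sphere_iff_abs.mpr habs, Metric.mem_ball_self hρ0⟩
  have hApre : IsPreconnected A := by
    rw [harc]
    exact isPreconnected_Ioo.image _ (qc_continuous ε).continuousOn
  have hTpre : IsPreconnected ((e.symm : ℂ → ℂ) '' A) :=
    hApre.image _ (e.symm.continuousOn.mono hAtgt)
  have hz₀T : z₀ ∈ (e.symm : ℂ → ℂ) '' A := by
    refine ⟨f z₀, hfz₀A, ?_⟩
    have h2 := e.left_inv hz₀src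
    rwa [show (e : ℂ → ℂ) z₀ = f z₀ from congrFun hecoe z₀] at h2
  have hTlevel : (e.symm : ℂ → ℂ) '' A ⊆ levelSet f D ε := by
    rintro - ⟨w, hwA, rfl⟩
    obtain ⟨hv', hfw⟩ := hsymmV' w hwA
    refine ⟨hv'.2.2, not_hasPoleAt_of_analyticAt hv'.2.1, ?_⟩
    rw [hfw]
    exact mem_sphere_iff_abs.mp hwA.1
  have hTΛ : (e.symm : ℂ → ℂ) '' A ⊆ Λ := by
    have h6 := hTpre.subset_connectedComponentIn hz₀T hTlevel
    rwa [st.eq_component hz₀] at h6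
  set V := V' ∩ f ⁻¹' Metric.ball (f z₀) ρ with hVdef
  have hVo : IsOpen V := hfcV'.isOpen_inter_preimage hV'o Metric.isOpen_ball
  have hz₀V : z₀ ∈ V := ⟨hz₀V', Metric.mem_ball_self hρ0⟩
  refine ⟨⟨V, (e.symm : ℂ → ℂ), ρ, δ, hVo, hz₀V, hρ0, hδ0, hδπ, harc, ?_, ?_, ?_⟩⟩
  · intro z hz
    have hfzA : f z ∈ A := ⟨mem_sphere_iff_abs.mpr (st.abs_eq hz.1), hz.2.2⟩
    refine ⟨hfzA, ?_⟩
    conv_lhs => rw [← hecoe]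
    exact e.left_inv (hV'src hz.2.1)
  · intro w hw
    obtain ⟨hv', hfw⟩ := hsymmV' w hw
    refine ⟨⟨hTΛ ⟨w, hw, rfl⟩, hv', ?_⟩, hfw⟩
    rw [Set.mem_preimage, hfw]
    exact hw.2
  · exact e.symm.continuousOn.mono hAtgt

/-- `g` is a lift of `Q` through `f` with values in `Λ`, over the set `T`. -/
def IsLift (f : ℂ → ℂ) (Λ : Set ℂ) (Q : ℝ → ℂ) (T : Set ℝ) (g : ℝ → ℂ) : Prop :=
  ContinuousOn g T ∧ ∀ t ∈ T, g t ∈ Λ ∧ f (g t) = Q t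

lemma IsLift.mono {Q : ℝ → ℂ} {T T' : Set ℝ} {g : ℝ → ℂ}
    (h : IsLift f Λ Q T g) (hsub : T' ⊆ T) : IsLift f Λ Q T' g :=
  ⟨h.1.mono hsub, fun t ht => h.2 t (hsub ht)⟩

lemma Setup.lift_unique (st : Setup D f ε Λ) {Q : ℝ → ℂ} {T : Set ℝ} {g₁ g₂ : ℝ → ℂ} {t₁ : ℝ}
    (hT : IsPreconnected T) (h₁ : IsLift f Λ Q T g₁) (h₂ : IsLift f Λ Q T g₂)
    (ht₁ : t₁ ∈ T) (he : g₁ t₁ = g₂ t₁) : Set.EqOn g₁ g₂ T := by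
  classical
  haveI : PreconnectedSpace T := Subtype.preconnectedSpace hT
  set M : Set T := {x : T | g₁ ↑x = g₂ ↑x} with hM
  have hMc : IsClosed M := isClosed_eq h₁.1.restrict h₂.1.restrict
  have hMo : IsOpen M := by
    rw [isOpen_iff_mem_nhds]
    intro x hx
    have hx' : g₁ ↑x = g₂ ↑x := hx
    have hzΛ : g₁ ↑x ∈ Λ := (h₁.2 ↑x x.2).1
    obtain ⟨a, -, hqa⟩ := qc_exists_eq st.hε (st.abs_eq hzΛ) 0
    obtain ⟨C⟩ := st.exists_chart hzΛ hqa
    set N : Set T := T.restrict g₁ ⁻¹' C.V ∩ T.restrict g₂ ⁻¹' C.V with hN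
    have hNo : IsOpen N :=
      (h₁.1.restrict.isOpen_preimage _ C.openV).inter (h₂.1.restrict.isOpen_preimage _ C.openV)
    have hxN : x ∈ N := by
      constructor
      · exact show g₁ ↑x ∈ C.V from C.memV
      · exact show g₂ ↑x ∈ C.V from hx' ▸ C.memV
    apply Filter.mem_of_superset (hNo.mem_nhds hxN)
    intro y hy
    have e₁ := (C.map_mem (g₁ ↑y) ⟨(h₁.2 ↑y y.2).1, hy.1⟩).2
    have e₂ := (C.map_mem (g₂ ↑y) ⟨(h₂.2 ↑y y.2).1, hy.2⟩).2
    rw [(h₁.2 ↑y y.2).2] at e₁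
    rw [(h₂.2 ↑y y.2).2] at e₂
    show g₁ ↑y = g₂ ↑y
    rw [← e₁, ← e₂]
  have huniv : M = Set.univ := IsClopen.eq_univ ⟨hMc, hMo⟩ ⟨⟨t₁, ht₁⟩, he⟩
  intro t ht
  have : (⟨t, ht⟩ : T) ∈ M := huniv ▸ Set.mem_univ _
  exact this

lemma Setup.fiber_finite (st : Setup D f ε Λ) (w₀ : ℂ) :
    {z | z ∈ Λ ∧ f z = w₀}.Finite := by
  classical
  set F := {z | z ∈ Λ ∧ f z = w₀} with hF
  have hch : ∀ z : F, ∃ Vz : Set ℂ, IsOpen Vz ∧ (z : ℂ) ∈ Vz ∧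
      ∀ y, y ∈ Λ ∩ Vz → f y = w₀ → y = (z : ℂ) := by
    rintro ⟨z, hzΛ, hzw⟩
    obtain ⟨a, -, hqa⟩ := qc_exists_eq st.hε (st.abs_eq hzΛ) 0
    obtain ⟨C⟩ := st.exists_chart hzΛ hqa
    refine ⟨C.V, C.openV, C.memV, ?_⟩
    intro y hy hyw
    have h1 := (C.map_mem y hy).2
    have h2 := (C.map_mem z ⟨hzΛ, C.memV⟩).2
    rw [hyw] at h1
    rw [hzw] at h2
    exact h1.symm.trans h2
  choose Vz hVo hVmem hVinj using hch
  haveI : CompactSpace Λ := isCompact_iff_compactSpace.mp st.hcpt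
  have hFc : IsCompact F := by
    have h1 : IsCompact (Subtype.val '' {x : Λ | f ↑x = w₀}) :=
      ((isClosed_eq st.contOn.restrict continuous_const).isCompact).image continuous_subtype_val
    have h2 : F = Subtype.val '' {x : Λ | f ↑x = w₀} := by
      ext y
      constructor
      · rintro ⟨hyΛ, hyw⟩
        exact ⟨⟨y, hyΛ⟩, hyw, rfl⟩
      · rintro ⟨⟨y', hy'⟩, hw, rfl⟩
        exact ⟨hy', hw⟩
    rwa [h2]
  obtain ⟨s, hs⟩ := hFc.elim_finite_subcover Vz hVo
    (fun z hz => Set.mem_iUnion.mpr ⟨⟨z, hz⟩, hVmem _⟩)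
  have hsub : F ⊆ Subtype.val '' (s : Set F) := by
    intro y hy
    obtain ⟨i, hiS, hyi⟩ := Set.mem_iUnion₂.mp (hs hy)
    exact ⟨i, hiS, (hVinj i y ⟨hy.1, hyi⟩ hy.2).symm⟩
  exact (s.finite_toSet.image _).subset hsub

lemma continuousOn_union_closed {α : Type*} [TopologicalSpace α] {g : ℝ → α} {s t : Set ℝ}
    (hs : IsClosed s) (ht : IsClosed t) (hgs : ContinuousOn g s) (hgt : ContinuousOn g t) :
    ContinuousOn g (s ∪ t) := by
  intro x hx
  have hcs : ContinuousWithinAt g s x := by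
    by_cases h : x ∈ s
    · exact hgs x h
    · exact continuousWithinAt_of_notMem_closure (by rwa [hs.closure_eq])
  have hct : ContinuousWithinAt g t x := by
    by_cases h : x ∈ t
    · exact hgt x h
    · exact continuousWithinAt_of_notMem_closure (by rwa [ht.closure_eq])
  exact hcs.union hct

set_option maxHeartbeats 1000000 in
lemma Setup.exists_lift_Ici (st : Setup D f ε Λ) {Q : ℝ → ℂ} (hQ : Continuous Q)
    (hQa : ∀ t, ‖Q t‖ = ε) {t₀ : ℝ} {z₀ : ℂ} (hz : z₀ ∈ Λ) (h0 : f z₀ = Q t₀) :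
    ∃ g, IsLift f Λ Q (Set.Ici t₀) g ∧ g t₀ = z₀ := by
  classical
  set A : Set ℝ := {a | t₀ ≤ a ∧ ∃ g, IsLift f Λ Q (Set.Icc t₀ a) g ∧ g t₀ = z₀} with hA
  have hmem0 : t₀ ∈ A := by
    refine ⟨le_refl _, fun _ => z₀, ⟨continuousOn_const, ?_⟩, rfl⟩
    intro t ht
    have ht' : t = t₀ := le_antisymm ht.2 ht.1
    subst ht'
    exact ⟨hz, h0⟩
  have hdown : ∀ a ∈ A, ∀ b, t₀ ≤ b → b ≤ a → b ∈ A := by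
    rintro a ⟨ha, g, hg, hg0⟩ b hb hba
    exact ⟨hb, g, hg.mono (Set.Icc_subset_Icc_right hba), hg0⟩
  have hext : ∀ c, t₀ ≤ c → (∀ η > 0, ∃ a ∈ A, c - η < a ∧ a ≤ c) → ∃ η > 0, c + η ∈ A := by
    intro c hc hap
    set F := {z | z ∈ Λ ∧ f z = Q c} with hFdef
    have hch : ∀ z : F, ∃ τ : ℝ, Nonempty (Chart f Λ ε (z : ℂ) τ) := by
      rintro ⟨z, hzΛ, hzw⟩
      obtain ⟨a, -, hqa⟩ := qc_exists_eq st.hε (st.abs_eq hzΛ) 0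
      exact ⟨0 + a, st.exists_chart hzΛ hqa⟩
    choose τf hCne using hch
    let C : (z : F) → Chart f Λ ε (z : ℂ) (τf z) := fun z => (hCne z).some
    set U := ⋃ z : F, (C z).V with hU
    have hUo : IsOpen U := isOpen_iUnion fun z => (C z).openV
    have hFU : F ⊆ U := fun z hz => Set.mem_iUnion.mpr ⟨⟨z, hz⟩, (C ⟨z, hz⟩).memV⟩
    have hK' : IsCompact (Λ \ U) := st.hcpt.diff hUo
    have hfK' : IsCompact (f '' (Λ \ U)) :=
      hK'.image_of_continuousOn (st.contOn.mono Set.diff_subset)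
    have hQcK' : Q c ∉ f '' (Λ \ U) := by
      rintro ⟨z, ⟨hzΛ, hzU⟩, hzq⟩
      exact hzU (hFU ⟨hzΛ, hzq⟩)
    obtain ⟨η₀, hη₀, hball⟩ : ∃ η₀ > 0, Metric.ball (Q c) η₀ ∩ f '' (Λ \ U) = ∅ := by
      have hcl : IsClosed (f '' (Λ \ U)) := hfK'.isClosed
      have hnh : (f '' (Λ \ U))ᶜ ∈ 𝓝 (Q c) := hcl.isOpen_compl.mem_nhds hQcK'
      obtain ⟨η₀, hη₀, hsub⟩ := Metric.mem_nhds_iff.mp hnh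
      refine ⟨η₀, hη₀, ?_⟩
      rw [Set.eq_empty_iff_forall_notMem]
      intro w hw
      exact (hsub hw.1) hw.2
    have hQcont : ∀ η' > 0, ∃ η₁ > 0, ∀ t, |t - c| ≤ η₁ → dist (Q t) (Q c) < η' := by
      intro η' hη'
      obtain ⟨δ₁, hδ₁, hd⟩ := Metric.continuous_iff.mp hQ c η' hη'
      exact ⟨δ₁ / 2, by linarith, fun t ht => hd t (by rw [Real.dist_eq]; linarith)⟩
    rcases Set.eq_empty_or_nonempty F with hFe | hFne
    · exfalso
      haveI hFE : IsEmpty F := Set.isEmpty_coe_sort.mpr hFe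
      have hUe : U = ∅ := Set.iUnion_of_empty _
      obtain ⟨η₁, hη₁, hQη⟩ := hQcont η₀ hη₀
      obtain ⟨a, haA, hac1, hac2⟩ := hap η₁ hη₁
      obtain ⟨ht₀a, g, hg, hg0⟩ := haA
      have hga := hg.2 a ⟨ht₀a, le_refl a⟩
      have hmem : f (g a) ∈ Metric.ball (Q c) η₀ ∩ f '' (Λ \ U) := by
        constructor
        · rw [Metric.mem_ball, hga.2]
          exact hQη a (by rw [abs_le]; constructor <;> linarith)
        · exact ⟨g a, ⟨hga.1, by rw [hUe]; exact Set.notMem_empty _⟩, rfl⟩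
      rw [hball] at hmem
      exact hmem
    · have hFin : F.Finite := st.fiber_finite (Q c)
      obtain ⟨ρm, hρm, hρle⟩ : ∃ ρm > 0, ∀ z : F, ρm ≤ (C z).ρ := by
        haveI : Fintype F := hFin.fintype
        haveI : Nonempty F := hFne.to_subtype
        refine ⟨Finset.univ.inf' Finset.univ_nonempty (fun z : F => (C z).ρ), ?_, ?_⟩
        · exact (Finset.lt_inf'_iff _).mpr fun z _ => (C z).ρpos
        · exact fun z => Finset.inf'_le _ (Finset.mem_univ z)
      obtain ⟨η₁, hη₁, hQη⟩ := hQcont (min η₀ ρm) (lt_min hη₀ hρm)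
      obtain ⟨a, haA, hac1, hac2⟩ := hap η₁ hη₁
      obtain ⟨ht₀a, g, hg, hg0⟩ := haA
      have hga := hg.2 a ⟨ht₀a, le_refl a⟩
      have hfga : dist (f (g a)) (Q c) < min η₀ ρm := by
        rw [hga.2]
        exact hQη a (by rw [abs_le]; constructor <;> linarith)
      have hgaU : g a ∈ U := by
        by_contra hcon
        have hmem : f (g a) ∈ Metric.ball (Q c) η₀ ∩ f '' (Λ \ U) :=
          ⟨by rw [Metric.mem_ball]; exact lt_of_lt_of_le hfga (min_le_left _ _),
            ⟨g a, ⟨hga.1, hcon⟩, rfl⟩⟩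
        rw [hball] at hmem
        exact hmem
      obtain ⟨w, hw⟩ := Set.mem_iUnion.mp hgaU
      have hfwQc : f (w : ℂ) = Q c := w.2.2
      have hQarc : ∀ t, |t - c| ≤ η₁ →
          Q t ∈ Metric.sphere (0 : ℂ) ε ∩ Metric.ball (f (w : ℂ)) (C w).ρ := by
        intro t ht
        refine ⟨mem_sphere_iff_abs.mpr (hQa t), ?_⟩
        rw [Metric.mem_ball, hfwQc]
        exact lt_of_lt_of_le (hQη t ht) (le_trans (min_le_right _ _) (hρle w))
      have hlifth : ∀ t, |t - c| ≤ η₁ → (C w).ψ (Q t) ∈ Λ ∩ (C w).V ∧ f ((C w).ψ (Q t)) = Q t :=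
        fun t ht => (C w).inv_mem _ (hQarc t ht)
      have hmatch : (C w).ψ (Q a) = g a := by
        have h1 := ((C w).map_mem (g a) ⟨hga.1, hw⟩).2
        rwa [hga.2] at h1
      refine ⟨η₁, hη₁, le_trans hc (by linarith), ?_⟩
      refine ⟨fun t => if t ≤ a then g t else (C w).ψ (Q t), ⟨?_, ?_⟩, ?_⟩
      · have hsplit : Set.Icc t₀ (c + η₁) = Set.Icc t₀ a ∪ Set.Icc a (c + η₁) :=
          (Set.Icc_union_Icc_eq_Icc ht₀a (by linarith)).symm
        rw [hsplit]
        apply continuousOn_union_closed isClosed_Icc isClosed_Icc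
        · exact ContinuousOn.congr hg.1 (fun t ht => if_pos ht.2)
        · have hcth : ContinuousOn (fun t => (C w).ψ (Q t)) {t | |t - c| ≤ η₁} :=
            (C w).cont.comp hQ.continuousOn (fun t ht => hQarc t ht)
          apply ContinuousOn.congr (hcth.mono ?_)
          · intro t ht
            by_cases hta : t ≤ a
            · have ht' : t = a := le_antisymm hta ht.1
              subst ht'
              simp only [if_pos (le_refl t), hmatch]
            · simp only [if_neg hta]
          · intro t ht
            rw [Set.mem_setOf_eq, abs_le]
            exact ⟨by linarith [ht.1], by linarith [ht.2]⟩
      · intro t ht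
        by_cases hta : t ≤ a
        · simp only [if_pos hta]
          exact hg.2 t ⟨ht.1, hta⟩
        · push_neg at hta
          simp only [if_neg (not_le.mpr hta)]
          have h8 := hlifth t (by rw [abs_le]; exact ⟨by linarith, by linarith [ht.2]⟩)
          exact ⟨h8.1.1, h8.2⟩
      · simp only [if_pos ht₀a]
        exact hg0
  have hnb : ∀ b, t₀ ≤ b → b ∈ A := by
    by_contra hcon
    push_neg at hcon
    obtain ⟨b, hb, hbA⟩ := hcon
    have hbdd : BddAbove A := by
      refine ⟨b, fun a ha => ?_⟩
      by_contra hab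
      push_neg at hab
      exact hbA (hdown a ha b hb hab.le)
    set c := sSup A with hc
    have hcA : t₀ ≤ c := le_csSup hbdd hmem0
    have hap : ∀ η > 0, ∃ a ∈ A, c - η < a ∧ a ≤ c := by
      intro η hη
      obtain ⟨a, haA, hlt⟩ := exists_lt_of_lt_csSup ⟨t₀, hmem0⟩ (by linarith : c - η < c)
      exact ⟨a, haA, hlt, le_csSup hbdd haA⟩
    obtain ⟨η, hη, hcη⟩ := hext c hcA hap
    have hle := le_csSup hbdd hcη
    linarith
  have hglobal : ∀ b, t₀ ≤ b → ∃ g, IsLift f Λ Q (Set.Icc t₀ b) g ∧ g t₀ = z₀ :=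
    fun b hb => (hnb b hb).2
  choose gl hgl hgl0 using hglobal
  refine ⟨fun t => if h : t₀ ≤ t then gl t h t else z₀, ⟨?_, ?_⟩, ?_⟩
  · intro t ht
    have htt : t₀ ≤ t := ht
    have hb : t₀ ≤ t + 1 := by linarith
    have hagree : Set.EqOn (fun u => if h : t₀ ≤ u then gl u h u else z₀) (gl (t + 1) hb)
        (Set.Icc t₀ (t + 1)) := by
      intro u hu
      simp only [dif_pos hu.1]
      have h2 := st.lift_unique isPreconnected_Icc (hgl u hu.1)
        ((hgl (t + 1) hb).mono (Set.Icc_subset_Icc_right hu.2))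
        ⟨le_refl t₀, hu.1⟩ ((hgl0 u hu.1).trans (hgl0 (t + 1) hb).symm)
      exact h2 ⟨hu.1, le_refl u⟩
    have hcw : ContinuousWithinAt (gl (t + 1) hb) (Set.Icc t₀ (t + 1)) t :=
      (hgl (t + 1) hb).1 t ⟨htt, by linarith⟩
    have hmemnhds : Set.Icc t₀ (t + 1) ∈ 𝓝[Set.Ici t₀] t := by
      apply Filter.mem_of_superset
        (inter_mem_nhdsWithin (Set.Ici t₀) (Iio_mem_nhds (by linarith : t < t + 1)))
      rintro y ⟨hy1, hy2⟩
      exact ⟨hy1, le_of_lt hy2⟩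
    refine (hcw.mono_of_mem_nhdsWithin hmemnhds).congr_of_eventuallyEq ?_ ?_
    · exact Filter.eventuallyEq_of_mem hmemnhds (fun y hy => hagree hy)
    · exact hagree ⟨htt, by linarith⟩
  · intro t ht
    have h1 := (hgl t ht).2 t ⟨ht, le_refl t⟩
    simpa only [dif_pos (show t₀ ≤ t from ht)] using h1
  · simp only [dif_pos (le_refl t₀)]
    exact hgl0 t₀ (le_refl t₀)

lemma Setup.exists_lift (st : Setup D f ε Λ) {Q : ℝ → ℂ} (hQ : Continuous Q)
    (hQa : ∀ t, ‖Q t‖ = ε) {t₀ : ℝ} {z₀ : ℂ} (hz : z₀ ∈ Λ) (h0 : f z₀ = Q t₀) :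
    ∃ g : ℝ → ℂ, Continuous g ∧ g t₀ = z₀ ∧ ∀ t, g t ∈ Λ ∧ f (g t) = Q t := by
  classical
  obtain ⟨gp, hgp, hgp0⟩ := st.exists_lift_Ici hQ hQa hz h0
  have hQ₂c : Continuous (fun t => Q (2 * t₀ - t)) := hQ.comp (by continuity)
  have hQ₂a : ∀ t, ‖Q (2 * t₀ - t)‖ = ε := fun t => hQa _
  have h0₂ : f z₀ = Q (2 * t₀ - t₀) := by
    rw [show 2 * t₀ - t₀ = t₀ by ring]
    exact h0
  obtain ⟨gm, hgm, hgm0⟩ := st.exists_lift_Ici hQ₂c hQ₂a hz h0₂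
  set g : ℝ → ℂ := fun t => if t₀ ≤ t then gp t else gm (2 * t₀ - t) with hgdef
  have heqi : Set.EqOn g (fun t => gm (2 * t₀ - t)) (Set.Iic t₀) := by
    intro t ht
    have ht' : t ≤ t₀ := ht
    rcases eq_or_lt_of_le ht' with rfl | h
    · show (if t ≤ t then gp t else gm (2 * t - t)) = gm (2 * t - t)
      rw [if_pos (le_refl t), hgp0, show 2 * t - t = t by ring, hgm0]
    · show (if t₀ ≤ t then gp t else gm (2 * t₀ - t)) = gm (2 * t₀ - t)
      rw [if_neg (not_le.mpr h)]
  have hconti : ContinuousOn g (Set.Iic t₀) := by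
    apply ContinuousOn.congr _ heqi
    apply hgm.1.comp (Continuous.continuousOn (by continuity))
    intro t ht
    show t₀ ≤ 2 * t₀ - t
    have : t ≤ t₀ := ht
    linarith
  have hconts : ContinuousOn g (Set.Ici t₀) :=
    ContinuousOn.congr hgp.1 (fun t ht => if_pos ht)
  have hcont : Continuous g := by
    rw [← continuousOn_univ, show (Set.univ : Set ℝ) = Set.Iic t₀ ∪ Set.Ici t₀ from
      Set.Iic_union_Ici.symm]
    exact continuousOn_union_closed isClosed_Iic isClosed_Ici hconti hconts
  refine ⟨g, hcont, by rw [hgdef]; simp only [if_pos (le_refl t₀)]; exact hgp0, ?_⟩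
  intro t
  by_cases ht : t₀ ≤ t
  · have h9 := hgp.2 t ht
    rw [hgdef]
    simpa only [if_pos ht] using h9
  · push_neg at ht
    have h9 := hgm.2 (2 * t₀ - t) (by show t₀ ≤ 2 * t₀ - t; linarith)
    rw [hgdef]
    simp only [if_neg (not_le.mpr ht)]
    refine ⟨h9.1, ?_⟩
    rw [h9.2]
    show Q (2 * t₀ - (2 * t₀ - t)) = Q t
    congr 1
    ring

end

end LevelCurve

open LevelCurve Real in
private lemma main_statement
    (D : Set ℂ) (hD : IsOpen D)
    (f : ℂ → ℂ)
    (hgen : ∀ z ∈ D, AnalyticAt ℂ f z ∨ HasPoleAt f z)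
    (ε : ℝ) (hε : 0 < ε)
    (Λ : Set ℂ) (hΛ : IsCompOf Λ (levelSet f D ε))
    (hcpt : IsCompact Λ)
    (hcrit : ∀ z ∈ Λ, deriv f z ≠ 0) :
    Nonempty (Λ ≃ₜ (Metric.sphere (0 : ℂ) 1 : Set ℂ)) := by
  classical
  have hπ := Real.pi_pos
  have st : Setup D f ε Λ := ⟨hD, hgen, hε, hΛ, hcpt, hcrit⟩
  obtain ⟨x₀, hx₀, hΛeq⟩ := hΛ
  have hz₀ : x₀ ∈ Λ := by rw [hΛeq]; exact mem_connectedComponentIn hx₀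
  obtain ⟨t₀', -, ht₀⟩ := qc_exists_eq hε (st.abs_eq hz₀) 0
  obtain ⟨G, hGc, hG0, hG⟩ := st.exists_lift (qc_continuous ε) (qc_abs ε hε.le) hz₀ ht₀.symm
  have hGmem : ∀ t, G t ∈ Λ := fun t => (hG t).1
  have hGq : ∀ t, f (G t) = qc ε t := fun t => (hG t).2
  have hliftG : ∀ T : Set ℝ, IsLift f Λ (qc ε) T G :=
    fun T => ⟨hGc.continuousOn, fun u _ => hG u⟩
  -- collisions give periods
  have hshift : ∀ s t, G s = G t → ∀ u, G (u + (s - t)) = G u := by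
    intro s t hst
    have hq : qc ε s = qc ε t := by rw [← hGq s, ← hGq t, hst]
    obtain ⟨k, hk⟩ := qc_eq_iff hε hq
    have hlift2 : IsLift f Λ (qc ε) Set.univ (fun u => G (u + (s - t))) := by
      refine ⟨(hGc.comp (continuous_add_right (s - t))).continuousOn, fun u _ => ⟨hGmem _, ?_⟩⟩
      rw [hGq, hk]
      exact qc_add_int_mul_two_pi ε u k
    have hagree : G (t + (s - t)) = G t := by rw [show t + (s - t) = s by ring]; exact hst
    have hEq := st.lift_unique isPreconnected_univ hlift2 (hliftG Set.univ)
      (Set.mem_univ t) hagree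
    exact fun u => hEq (Set.mem_univ u)
  -- iterating periods
  have hper_z : ∀ (p : ℝ), (∀ u, G (u + p) = G u) → ∀ (j : ℤ) (u : ℝ), G (u + p * j) = G u := by
    intro p hp j
    induction j using Int.induction_on with
    | zero => intro u; simp
    | succ i ih =>
      intro u
      have ih' := ih u
      push_cast at ih' ⊢
      have e : u + p * ((i : ℝ) + 1) = (u + p * (i : ℝ)) + p := by ring
      rw [e, hp]
      exact ih'
    | pred i ih =>
      intro u
      have ih' := ih u
      push_cast at ih' ⊢
      have e : u + p * (-(i : ℝ) - 1) = (u + p * (-(i : ℝ))) - p := by ring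
      rw [e]
      have h2 := hp ((u + p * (-(i : ℝ))) - p)
      rw [sub_add_cancel] at h2
      rw [← h2]
      exact ih'
  -- existence of a positive integer period
  have hPex : ∃ n : ℕ, 0 < n ∧ ∀ u, G (u + (n : ℝ) * (2 * π)) = G u := by
    set F₀ := {z | z ∈ Λ ∧ f z = qc ε 0} with hF₀
    have hfin : F₀.Finite := st.fiber_finite _
    haveI : Finite F₀ := hfin.to_subtype
    have hφ : ∀ n : ℕ, G ((n : ℝ) * (2 * π)) ∈ F₀ := by
      intro n
      refine ⟨hGmem _, ?_⟩
      rw [hGq]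
      have := qc_add_int_mul_two_pi ε 0 (n : ℤ)
      rw [zero_add] at this
      rw [show ((n : ℝ) * (2 * π)) = (((n : ℤ) : ℝ) * (2 * π)) by push_cast; ring, this]
    obtain ⟨k, l, hkl, heq⟩ := Finite.exists_ne_map_eq_of_infinite
      (fun n : ℕ => (⟨G ((n : ℝ) * (2 * π)), hφ n⟩ : F₀))
    have heq' : G ((k : ℝ) * (2 * π)) = G ((l : ℝ) * (2 * π)) := congrArg Subtype.val heq
    have hperj : ∀ u, G (u + (((k : ℤ) - l : ℤ) : ℝ) * (2 * π)) = G u := by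
      have h3 := hshift _ _ heq'
      intro u
      have h4 := h3 u
      rw [show ((k : ℝ) * (2 * π) - (l : ℝ) * (2 * π)) = (((k : ℤ) - l : ℤ) : ℝ) * (2 * π)
        by push_cast; ring] at h4
      exact h4
    set j : ℤ := (k : ℤ) - l with hj
    have hjne : j ≠ 0 := sub_ne_zero.mpr (by exact_mod_cast hkl)
    refine ⟨j.natAbs, Int.natAbs_pos.mpr hjne, ?_⟩
    rcases Int.natAbs_eq j with h | h
    · intro u
      have h' : ((j : ℤ) : ℝ) = ((j.natAbs : ℕ) : ℝ) := by
        have hz : ((j.natAbs : ℕ) : ℤ) = j := by omega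
        calc ((j : ℤ) : ℝ) = (((j.natAbs : ℕ) : ℤ) : ℝ) := by rw [hz]
          _ = ((j.natAbs : ℕ) : ℝ) := Int.cast_natCast _
      have h6 := hperj u
      rwa [h'] at h6
    · intro u
      have h' : ((j.natAbs : ℕ) : ℝ) = -((j : ℤ) : ℝ) := by
        have hz : ((j.natAbs : ℕ) : ℤ) = -j := by omega
        calc ((j.natAbs : ℕ) : ℝ) = (((j.natAbs : ℕ) : ℤ) : ℝ) := (Int.cast_natCast _).symm
          _ = ((-j : ℤ) : ℝ) := by rw [hz]
          _ = -((j : ℤ) : ℝ) := Int.cast_neg j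
      have h5 := hper_z _ hperj (-1 : ℤ) u
      have e : u + (((j : ℤ) : ℝ) * (2 * π)) * ((-1 : ℤ) : ℝ)
          = u + ((j.natAbs : ℕ) : ℝ) * (2 * π) := by
        rw [h']
        push_cast
        ring
      rw [e] at h5
      exact h5
  have hmspec := Nat.find_spec hPex
  set m := Nat.find hPex with hm
  set T₀ : ℝ := (m : ℝ) * (2 * π) with hT₀
  have hT₀pos : 0 < T₀ := by
    have hm0 : 0 < (m : ℝ) := by exact_mod_cast hmspec.1
    positivity
  have hperT : ∀ u, G (u + T₀) = G u := hmspec.2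
  -- collisions are multiples of T₀
  have hmod : ∀ s t, G s = G t → ∃ j : ℤ, s - t = T₀ * j := by
    intro s t hst
    have hq : qc ε s = qc ε t := by rw [← hGq s, ← hGq t, hst]
    obtain ⟨k', hk'⟩ := qc_eq_iff hε hq
    have hperk : ∀ u, G (u + ((k' : ℝ)) * (2 * π)) = G u := by
      have h3 := hshift s t hst
      intro u
      have h4 := h3 u
      rwa [hk'] at h4
    have hmne : ((m : ℤ)) ≠ 0 := by exact_mod_cast hmspec.1.ne'
    have hdiv : (m : ℤ) * (k' / m) + k' % m = k' := Int.mul_ediv_add_emod k' m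
    have hr0 : 0 ≤ k' % (m : ℤ) := Int.emod_nonneg k' hmne
    have hrlt : k' % (m : ℤ) < m := Int.emod_lt_of_pos k' (by exact_mod_cast hmspec.1)
    have hperr : ∀ u, G (u + ((k' % (m : ℤ) : ℤ) : ℝ) * (2 * π)) = G u := by
      intro u
      have h6 := hper_z T₀ hperT (k' / m) (u + ((k' % (m : ℤ) : ℤ) : ℝ) * (2 * π))
      have hdc : ((m : ℝ)) * ((k' / (m : ℤ) : ℤ) : ℝ) + ((k' % (m : ℤ) : ℤ) : ℝ) = (k' : ℝ) := by
        exact_mod_cast congrArg (fun x : ℤ => (x : ℝ)) hdiv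
      have e : u + ((k' % (m : ℤ) : ℤ) : ℝ) * (2 * π) + T₀ * ((k' / (m : ℤ) : ℤ) : ℝ)
          = u + (k' : ℝ) * (2 * π) := by
        rw [hT₀, ← hdc]
        ring
      rw [e] at h6
      rw [← h6, hperk u]
    have hreq : k' % (m : ℤ) = 0 := by
      by_contra hrne
      have hrpos : 0 < k' % (m : ℤ) := lt_of_le_of_ne hr0 (Ne.symm hrne)
      have hlt : (k' % (m : ℤ)).toNat < m := by omega
      refine Nat.find_min hPex hlt ⟨by omega, ?_⟩
      intro u
      have h7 := hperr u
      have hcast : (((k' % (m : ℤ)).toNat : ℕ) : ℝ) = ((k' % (m : ℤ) : ℤ) : ℝ) := by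
        exact_mod_cast congrArg (fun x : ℤ => (x : ℝ)) (Int.toNat_of_nonneg hr0)
      rw [hcast]
      exact h7
    refine ⟨k' / m, ?_⟩
    have hdiv' : ((m : ℤ)) * (k' / m) = k' := by omega
    have hc : ((m : ℝ)) * ((k' / (m : ℤ) : ℤ) : ℝ) = (k' : ℝ) := by
      exact_mod_cast congrArg (fun x : ℤ => (x : ℝ)) hdiv'
    rw [hk', hT₀, ← hc]
    ring
  have hperiodic : Function.Periodic G T₀ := fun u => hperT u
  -- range G = Λ
  have hsub : Set.range G ⊆ Λ := by rintro - ⟨t, rfl⟩; exact hGmem t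
  have hcl : IsClosed (Set.range G) := by
    rw [← hperiodic.image_Icc hT₀pos 0]
    exact ((isCompact_Icc.image hGc).isClosed)
  have hopen : ∀ z ∈ Set.range G, ∃ Vo : Set ℂ, IsOpen Vo ∧ z ∈ Vo ∧ Λ ∩ Vo ⊆ Set.range G := by
    rintro - ⟨t, rfl⟩
    obtain ⟨C⟩ := st.exists_chart (hGmem t) (hGq t).symm
    refine ⟨C.V, C.openV, C.memV, ?_⟩
    rintro z' ⟨hz'Λ, hz'V⟩
    have hfz' := C.map_mem z' ⟨hz'Λ, hz'V⟩
    have hfz1 := hfz'.1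
    rw [C.arc] at hfz1
    obtain ⟨τ, hτIoo, hτ⟩ := hfz1
    have hlifth : IsLift f Λ (qc ε) (Set.Ioo (t - C.δ) (t + C.δ)) (fun u => C.ψ (qc ε u)) := by
      constructor
      · apply C.cont.comp (qc_continuous ε).continuousOn
        intro u hu
        rw [C.arc]
        exact Set.mem_image_of_mem _ hu
      · intro u hu
        have h2 := C.inv_mem (qc ε u) (by rw [C.arc]; exact Set.mem_image_of_mem _ hu)
        exact ⟨h2.1.1, h2.2⟩
    have hagree : C.ψ (qc ε t) = G t := by
      have h3 := (C.map_mem (G t) ⟨hGmem t, C.memV⟩).2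
      rwa [hGq t] at h3
    have htIoo : t ∈ Set.Ioo (t - C.δ) (t + C.δ) := by
      constructor <;> [linarith [C.δpos]; linarith [C.δpos]]
    have hEq := st.lift_unique isPreconnected_Ioo hlifth (hliftG _) htIoo hagree
    have h4 := hfz'.2
    rw [← hτ] at h4
    have h5 : C.ψ (qc ε τ) = G τ := hEq hτIoo
    rw [← h4, h5]
    exact Set.mem_range_self τ
  have hrange : Set.range G = Λ := by
    haveI : PreconnectedSpace Λ := Subtype.preconnectedSpace st.isPreconnected
    set M : Set Λ := Subtype.val ⁻¹' (Set.range G) with hMdef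
    have hMc : IsClosed M := hcl.preimage continuous_subtype_val
    have hMo : IsOpen M := by
      rw [isOpen_iff_mem_nhds]
      intro x hx
      obtain ⟨Vo, hVoO, hxVo, hVsub⟩ := hopen ↑x hx
      apply Filter.mem_of_superset (((hVoO.preimage continuous_subtype_val)).mem_nhds hxVo)
      intro y hy
      exact hVsub ⟨y.2, hy⟩
    have hMne : M.Nonempty := ⟨⟨G 0, hGmem 0⟩, Set.mem_range_self 0⟩
    have huniv : M = Set.univ := IsClopen.eq_univ ⟨hMc, hMo⟩ hMne
    apply Set.Subset.antisymm hsub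
    intro z hzΛ
    have : (⟨z, hzΛ⟩ : Λ) ∈ M := huniv ▸ Set.mem_univ _
    exact this
  -- the homeomorphism with AddCircle T₀
  set G' : ℝ → Λ := fun t => ⟨G t, hGmem t⟩ with hG'def
  have hG'c : Continuous G' := hGc.subtype_mk _
  have hper' : Function.Periodic G' T₀ := fun u => Subtype.ext (hperT u)
  set Φ : AddCircle T₀ → Λ := hper'.lift with hΦdef
  have hΦc : Continuous Φ := hG'c.quotient_liftOn' _
  have hΦbij : Function.Bijective Φ := by
    constructor
    · intro a b
      induction a using QuotientAddGroup.induction_on with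
      | H s =>
        induction b using QuotientAddGroup.induction_on with
        | H t =>
          intro hst
          rw [hΦdef, hper'.lift_coe, hper'.lift_coe] at hst
          have hGst : G s = G t := congrArg Subtype.val hst
          obtain ⟨j, hj⟩ := hmod s t hGst
          rw [QuotientAddGroup.eq, AddSubgroup.mem_zmultiples_iff]
          refine ⟨-j, ?_⟩
          rw [zsmul_eq_mul]
          push_cast
          linear_combination hj
    · intro z
      have hz : (z : ℂ) ∈ Set.range G := hrange ▸ z.2
      obtain ⟨t, ht⟩ := hz
      refine ⟨(t : AddCircle T₀), ?_⟩
      rw [hΦdef, hper'.lift_coe]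
      exact Subtype.ext ht
  haveI : Fact (0 < T₀) := ⟨hT₀pos⟩
  haveI : CompactSpace Λ := isCompact_iff_compactSpace.mp st.hcpt
  have e₁ : AddCircle T₀ ≃ₜ Λ :=
    Continuous.homeoOfEquivCompactToT2 (f := Equiv.ofBijective Φ hΦbij) hΦc
  have e₂ : AddCircle T₀ ≃ₜ Circle := AddCircle.homeomorphCircle hT₀pos.ne'
  have e₃ : Circle ≃ₜ (Metric.sphere (0 : ℂ) 1 : Set ℂ) :=
    { toFun := fun x => ⟨x.1, x.2⟩
      invFun := fun x => ⟨x.1, x.2⟩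
      left_inv := fun x => rfl
      right_inv := fun x => rfl
      continuous_toFun := by exact Continuous.subtype_mk continuous_subtype_val _
      continuous_invFun := by exact Continuous.subtype_mk continuous_subtype_val _ }
  exact ⟨(e₁.symm.trans e₂).trans e₃⟩

/-- A compact level curve of a nonconstant meromorphic function on a simply connected open
set, containing no critical point, is homeomorphic to the unit circle. -/
theorem compact_noncritical_level_curve_is_circle
    (D : Set ℂ) (hD : IsOpen D) (hsc : SimplyConnectedSpace D)
    (f : ℂ → ℂ) (hf : MeromorphicOn f D)
    (hgen : ∀ z ∈ D, AnalyticAt ℂ f z ∨ HasPoleAt f z)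
    (hnc : ¬ ∃ c : ℂ, ∀ z ∈ D, f z = c)
    (ε : ℝ) (hε : 0 < ε)
    (Λ : Set ℂ) (hΛ : IsCompOf Λ (levelSet f D ε))
    (hcpt : IsCompact Λ)
    (hcrit : ∀ z ∈ Λ, deriv f z ≠ 0) :
    Nonempty (Λ ≃ₜ (Metric.sphere (0 : ℂ) 1 : Set ℂ)) := by
  exact main_statement D hD f hgen ε hε Λ hΛ hcpt hcrit
end
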